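/- arXiv:2506.10339 — 6 statements merged into one kernel-verified Lean document; each statement's English description precedes it below -/
import Mathlib

section
/- Fix ε ∈ (0,1) and an integer time t. Then the number of shift vectors τ ∈ ∏_{i=1}^n {0, …, T_i − 1} satisfying Σ_{i=1}^n I_i(τ_i, t) ≥ ((1+ε)/2)·Σ_{i=1}^n H_i·(1 + 1/T_i) is at most exp(−(ε²/6)·H_Σ/H_max)·∏_{i=1}^n T_i, where H_max = max_{i∈[n]} H_i. Equivalently, if τ^R is drawn by independently sampling each τ^R_i uniformly from {0, …, T_i − 1}, then P[Σ_{i=1}^n I_i(τ^R_i, t) ≥ ((1+ε)/2)·Σ_{i=1}^n H_i·(1 + 1/T_i)] ≤ exp(−(ε²/6)·H_Σ/H_max). -/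
noncomputable def invLevel (T H : ℕ) (τ t : ℤ) : ℝ :=
  (H : ℝ) * (1 - (((t - τ) % (T : ℤ) : ℤ) : ℝ) / (T : ℝ))

noncomputable def totalInv {ι : Type*} [Fintype ι] (T H : ι → ℕ) (τ : ι → ℤ) (t : ℤ) : ℝ :=
  ∑ i, invLevel (T i) (H i) (τ i) t

def cycleLen {ι : Type*} [Fintype ι] (T : ι → ℕ) : ℕ := Finset.univ.lcm T

noncomputable def Imax {ι : Type*} [Fintype ι] (T H : ι → ℕ) (τ : ι → ℤ) : ℝ :=
  sSup (totalInv T H τ '' Set.Ico (0 : ℤ) (cycleLen T : ℤ))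

noncomputable def OPTdisc {ι : Type*} [Fintype ι] (T H : ι → ℕ) : ℝ :=
  sInf (Set.range (Imax T H))

lemma invLevel_nonneg {T H : ℕ} (hT : 0 < T) (τ t : ℤ) : 0 ≤ invLevel T H τ t := by
  unfold invLevel
  have hT' : (0:ℝ) < (T:ℝ) := by exact_mod_cast hT
  have hTZ : (0:ℤ) < (T:ℤ) := by exact_mod_cast hT
  have h1 : ((t - τ) % (T:ℤ)) < (T:ℤ) := Int.emod_lt_of_pos _ hTZ
  have h2 : ((((t - τ) % (T:ℤ) : ℤ)) : ℝ) / (T:ℝ) ≤ 1 := by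
    rw [div_le_one hT']; exact_mod_cast h1.le
  have := Nat.cast_nonneg (α := ℝ) H
  nlinarith

lemma invLevel_le {T H : ℕ} (hT : 0 < T) (τ t : ℤ) : invLevel T H τ t ≤ (H:ℝ) := by
  unfold invLevel
  have hT' : (0:ℝ) < (T:ℝ) := by exact_mod_cast hT
  have hTZ : ((T:ℤ)) ≠ 0 := by exact_mod_cast hT.ne'
  have h1 : (0:ℤ) ≤ (t - τ) % (T:ℤ) := Int.emod_nonneg _ hTZ
  have h2 : (0:ℝ) ≤ ((((t - τ) % (T:ℤ) : ℤ)) : ℝ) / (T:ℝ) := by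
    apply div_nonneg _ hT'.le; exact_mod_cast h1
  have := Nat.cast_nonneg (α := ℝ) H
  nlinarith

lemma sum_emod_reindex {T : ℤ} (hT : 0 < T) (t : ℤ) (f : ℤ → ℝ) :
    ∑ τ ∈ Finset.Ico (0:ℤ) T, f ((t - τ) % T) = ∑ k ∈ Finset.Ico (0:ℤ) T, f k := by
  have key : ∀ a ∈ Finset.Ico (0:ℤ) T, (t - (t - a) % T) % T = a := by
    intro a ha
    rw [Finset.mem_Ico] at ha
    have h1 : (t - (t - a) % T) % T = (t - (t - a)) % T := by
      conv_lhs => rw [Int.sub_emod]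
      conv_rhs => rw [Int.sub_emod t (t - a)]
      rw [Int.emod_emod_of_dvd _ dvd_rfl]
    rw [h1, sub_sub_cancel, Int.emod_eq_of_lt ha.1 ha.2]
  have hmem : ∀ a ∈ Finset.Ico (0:ℤ) T, (t - a) % T ∈ Finset.Ico (0:ℤ) T := by
    intro a _
    rw [Finset.mem_Ico]
    exact ⟨Int.emod_nonneg _ hT.ne', Int.emod_lt_of_pos _ hT⟩
  exact Finset.sum_nbij' (i := fun a => (t - a) % T) (j := fun a => (t - a) % T)
    hmem hmem key key (fun a _ => rfl)

lemma sum_Ico_int_eq_range (T : ℕ) (f : ℤ → ℝ) :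
    ∑ k ∈ Finset.Ico (0:ℤ) (T:ℤ), f k = ∑ k ∈ Finset.range T, f (k:ℤ) := by
  refine Finset.sum_nbij' (i := fun k => k.toNat) (j := fun k => (k:ℤ)) ?_ ?_ ?_ ?_ ?_
  · intro a ha; rw [Finset.mem_Ico] at ha; rw [Finset.mem_range]; omega
  · intro a ha; rw [Finset.mem_range] at ha; rw [Finset.mem_Ico]; omega
  · intro a ha; rw [Finset.mem_Ico] at ha; omega
  · intro a _; omega
  · intro a ha; rw [Finset.mem_Ico] at ha
    congr 1; omega

lemma sum_invLevel (T H : ℕ) (hT : 0 < T) (t : ℤ) :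
    ∑ τ ∈ Finset.Ico (0:ℤ) (T:ℤ), invLevel T H τ t = (H:ℝ) * (1 + 1/(T:ℝ)) / 2 * (T:ℝ) := by
  have hT' : (0:ℝ) < (T:ℝ) := by exact_mod_cast hT
  have hTZ : (0:ℤ) < (T:ℤ) := by exact_mod_cast hT
  have h0 : ∑ τ ∈ Finset.Ico (0:ℤ) (T:ℤ), invLevel T H τ t
      = ∑ k ∈ Finset.Ico (0:ℤ) (T:ℤ), (H:ℝ) * (1 - (k:ℝ)/(T:ℝ)) :=
    sum_emod_reindex hTZ t (fun k => (H:ℝ) * (1 - (k:ℝ)/(T:ℝ)))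
  rw [h0, sum_Ico_int_eq_range]
  have gauss : ∑ k ∈ Finset.range T, ((k:ℤ):ℝ) = (T:ℝ) * ((T:ℝ) - 1) / 2 := by
    have h := Finset.sum_range_id_mul_two T
    have h1 : ((∑ i ∈ Finset.range T, i : ℕ) : ℝ) * 2 = (T:ℝ) * ((T:ℝ) - 1) := by
      rw [← Nat.cast_ofNat, ← Nat.cast_mul, h]
      push_cast [Nat.cast_sub hT]
      ring
    push_cast
    push_cast at h1
    linarith
  have hsum : ∑ k ∈ Finset.range T, (H:ℝ) * (1 - ((k:ℤ):ℝ)/(T:ℝ))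
      = (T:ℝ) * (H:ℝ) - (H:ℝ)/(T:ℝ) * ((T:ℝ) * ((T:ℝ) - 1) / 2) := by
    rw [Finset.sum_congr rfl (fun k _ => by
      show (H:ℝ) * (1 - ((k:ℤ):ℝ)/(T:ℝ)) = (H:ℝ) - (H:ℝ)/(T:ℝ) * ((k:ℤ):ℝ)
      field_simp)]
    rw [Finset.sum_sub_distrib, Finset.sum_const, ← Finset.mul_sum, gauss]
    simp [mul_comm]
  rw [hsum]
  field_simp
  ring

lemma exp_convex_bound {x B s : ℝ} (hx0 : 0 ≤ x) (hxB : x ≤ B) (hB : 0 < B) :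
    Real.exp (s * x) ≤ 1 + x / B * (Real.exp (s * B) - 1) := by
  have ha : (0:ℝ) ≤ 1 - x / B := by
    have : x / B ≤ 1 := (div_le_one hB).2 hxB
    linarith
  have hb : (0:ℝ) ≤ x / B := div_nonneg hx0 hB.le
  have h := convexOn_exp.2 (Set.mem_univ (0:ℝ)) (Set.mem_univ (s * B)) ha hb (by ring)
  simp only [smul_eq_mul, mul_zero, Real.exp_zero, zero_add] at h
  have h2 : x / B * (s * B) = s * x := by field_simp
  rw [h2] at h
  linarith

lemma item_mgf (T H : ℕ) (hT : 0 < T) (t : ℤ) {B s : ℝ} (hB : 0 < B)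
    (hHB : (H:ℝ) ≤ B) (hs : 0 ≤ s) :
    ∑ τ ∈ Finset.Ico (0:ℤ) (T:ℤ), Real.exp (s * invLevel T H τ t)
      ≤ (T:ℝ) * Real.exp ((Real.exp (s * B) - 1) * ((H:ℝ) * (1 + 1/(T:ℝ)) / 2) / B) := by
  have hT' : (0:ℝ) < (T:ℝ) := by exact_mod_cast hT
  set E : ℝ := Real.exp (s * B) with hE
  set M : ℝ := (H:ℝ) * (1 + 1/(T:ℝ)) / 2 with hM
  have step1 : ∑ τ ∈ Finset.Ico (0:ℤ) (T:ℤ), Real.exp (s * invLevel T H τ t)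
      ≤ ∑ τ ∈ Finset.Ico (0:ℤ) (T:ℤ), (1 + invLevel T H τ t / B * (E - 1)) := by
    refine Finset.sum_le_sum fun τ _ => ?_
    exact exp_convex_bound (invLevel_nonneg hT τ t) ((invLevel_le hT τ t).trans hHB) hB
  have hcard : ((Finset.Ico (0:ℤ) (T:ℤ)).card : ℝ) = (T:ℝ) := by
    rw [Int.card_Ico]; simp
  have step2 : ∑ τ ∈ Finset.Ico (0:ℤ) (T:ℤ), (1 + invLevel T H τ t / B * (E - 1))
      = (T:ℝ) * (1 + (E - 1) * M / B) := by
    rw [Finset.sum_add_distrib, Finset.sum_const, nsmul_eq_mul]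
    have : ∑ τ ∈ Finset.Ico (0:ℤ) (T:ℤ), invLevel T H τ t / B * (E - 1)
        = (∑ τ ∈ Finset.Ico (0:ℤ) (T:ℤ), invLevel T H τ t) / B * (E - 1) := by
      rw [Finset.sum_div, Finset.sum_mul]
    rw [this, sum_invLevel T H hT t, ← hM, hcard]
    field_simp
  have step3 : (T:ℝ) * (1 + (E - 1) * M / B) ≤ (T:ℝ) * Real.exp ((E - 1) * M / B) := by
    apply mul_le_mul_of_nonneg_left _ hT'.le
    have := Real.add_one_le_exp ((E - 1) * M / B)
    linarith
  calc ∑ τ ∈ Finset.Ico (0:ℤ) (T:ℤ), Real.exp (s * invLevel T H τ t)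
      ≤ ∑ τ ∈ Finset.Ico (0:ℤ) (T:ℤ), (1 + invLevel T H τ t / B * (E - 1)) := step1
    _ = (T:ℝ) * (1 + (E - 1) * M / B) := step2
    _ ≤ (T:ℝ) * Real.exp ((E - 1) * M / B) := step3

open Classical in
/-- The number of shift vectors `τ ∈ ∏ {0,…,T_i−1}` whose inventory level at a fixed
integer time `t` is at least `((1+ε)/2)·Σ H_i(1+1/T_i)` is at most
`exp(−(ε²/6)·H_Σ/H_max)·∏ T_i`. -/
theorem stmt2 {n : ℕ} (hn : 0 < n) (T H : Fin n → ℕ) (hT : ∀ i, 0 < T i)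
    (hH : ∀ i, 0 < H i) (ε : ℝ) (hε : ε ∈ Set.Ioo (0 : ℝ) 1) (t : ℤ) :
    (((Fintype.piFinset fun i => Finset.Ico (0 : ℤ) (T i : ℤ)).filter
        (fun τ => ((1 + ε) / 2) * ∑ i, (H i : ℝ) * (1 + 1 / (T i : ℝ))
          ≤ ∑ i, invLevel (T i) (H i) (τ i) t)).card : ℝ)
      ≤ Real.exp (-(ε ^ 2 / 6) * ((∑ i, (H i : ℝ)) / ((Finset.univ.sup H : ℕ) : ℝ)))
          * ∏ i, (T i : ℝ) := by
  obtain ⟨hε0, hε1⟩ := hε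
  set B : ℝ := ((Finset.univ.sup H : ℕ) : ℝ) with hBdef
  have hBH : ∀ i, (H i : ℝ) ≤ B := fun i => by
    exact_mod_cast Nat.cast_le.2 (Finset.le_sup (Finset.mem_univ i))
  have hB1 : (1:ℝ) ≤ B := by
    refine le_trans ?_ (hBH ⟨0, hn⟩)
    exact_mod_cast hH ⟨0, hn⟩
  have hB0 : (0:ℝ) < B := lt_of_lt_of_le one_pos hB1
  set s : ℝ := 2 * ε / (3 * B) with hsdef
  have hs0 : 0 < s := by positivity
  have hsB : s * B = 2 * ε / 3 := by rw [hsdef]; field_simp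
  set a : ℝ := (1 + ε) / 2 * ∑ i, (H i : ℝ) * (1 + 1 / (T i : ℝ)) with hadef
  set μ : ℝ := ∑ i, (H i : ℝ) * (1 + 1 / (T i : ℝ)) / 2 with hμdef
  have haμ : a = (1 + ε) * μ := by
    rw [hadef, hμdef, ← Finset.sum_div]; ring
  set P := Fintype.piFinset fun i => Finset.Ico (0 : ℤ) (T i : ℤ) with hP
  set S : (Fin n → ℤ) → ℝ := fun τ => ∑ i, invLevel (T i) (H i) (τ i) t with hS
  set F := P.filter (fun τ => a ≤ S τ) with hF
  -- Step A: Chernoff / Markov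
  have stepA : (F.card : ℝ) * Real.exp (s * a) ≤ ∑ τ ∈ P, Real.exp (s * S τ) := by
    calc (F.card : ℝ) * Real.exp (s * a) = ∑ _τ ∈ F, Real.exp (s * a) := by
          rw [Finset.sum_const, nsmul_eq_mul]
      _ ≤ ∑ τ ∈ F, Real.exp (s * S τ) := by
          refine Finset.sum_le_sum fun τ hτ => ?_
          have := (Finset.mem_filter.1 hτ).2
          exact Real.exp_le_exp.2 (mul_le_mul_of_nonneg_left this hs0.le)
      _ ≤ ∑ τ ∈ P, Real.exp (s * S τ) :=
          Finset.sum_le_sum_of_subset_of_nonneg (Finset.filter_subset _ _)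
            (fun _ _ _ => (Real.exp_pos _).le)
  -- Step B: factor the sum over the product set
  have stepB : ∑ τ ∈ P, Real.exp (s * S τ)
      = ∏ i, ∑ τi ∈ Finset.Ico (0:ℤ) (T i : ℤ), Real.exp (s * invLevel (T i) (H i) τi t) := by
    rw [Finset.prod_univ_sum]
    refine Finset.sum_congr rfl fun τ _ => ?_
    rw [hS]
    rw [Finset.mul_sum, Real.exp_sum]
  -- Step C: per-item bound
  have stepC : ∏ i, ∑ τi ∈ Finset.Ico (0:ℤ) (T i : ℤ), Real.exp (s * invLevel (T i) (H i) τi t)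
      ≤ ∏ i, ((T i : ℝ) * Real.exp ((Real.exp (s * B) - 1)
          * ((H i : ℝ) * (1 + 1/(T i : ℝ)) / 2) / B)) := by
    refine Finset.prod_le_prod (fun i _ => ?_) (fun i _ => ?_)
    · exact Finset.sum_nonneg fun τi _ => (Real.exp_pos _).le
    · exact item_mgf (T i) (H i) (hT i) t hB0 (hBH i) hs0.le
  have stepC' : ∏ i, ((T i : ℝ) * Real.exp ((Real.exp (s * B) - 1)
          * ((H i : ℝ) * (1 + 1/(T i : ℝ)) / 2) / B))
      = (∏ i, (T i : ℝ)) * Real.exp ((Real.exp (s * B) - 1) * μ / B) := by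
    rw [Finset.prod_mul_distrib, ← Real.exp_sum]
    congr 1
    rw [hμdef, Finset.mul_sum, Finset.sum_div]
  -- combine
  have hmain : (F.card : ℝ)
      ≤ Real.exp (-(s * a) + (Real.exp (s * B) - 1) * μ / B) * ∏ i, (T i : ℝ) := by
    have h1 : (F.card : ℝ) * Real.exp (s * a)
        ≤ (∏ i, (T i : ℝ)) * Real.exp ((Real.exp (s * B) - 1) * μ / B) := by
      calc (F.card : ℝ) * Real.exp (s * a) ≤ ∑ τ ∈ P, Real.exp (s * S τ) := stepA
        _ = _ := stepB
        _ ≤ _ := stepC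
        _ = _ := stepC'
    have h2 : (F.card : ℝ) ≤ (∏ i, (T i : ℝ)) * Real.exp ((Real.exp (s * B) - 1) * μ / B)
        / Real.exp (s * a) := (le_div_iff₀ (Real.exp_pos _)).2 h1
    calc (F.card : ℝ) ≤ (∏ i, (T i : ℝ)) * Real.exp ((Real.exp (s * B) - 1) * μ / B)
          / Real.exp (s * a) := h2
      _ = Real.exp (-(s * a) + (Real.exp (s * B) - 1) * μ / B) * ∏ i, (T i : ℝ) := by
          rw [Real.exp_add, Real.exp_neg, div_eq_mul_inv]
          ring
  -- scalar inequality on the exponent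
  have hmuS : (∑ i, (H i : ℝ)) / 2 ≤ μ := by
    rw [hμdef, Finset.sum_div]
    refine Finset.sum_le_sum fun i _ => ?_
    have hTi : (0:ℝ) < (T i : ℝ) := by exact_mod_cast hT i
    have h1 : (0:ℝ) ≤ 1 / (T i : ℝ) := by positivity
    have h2 : (0:ℝ) ≤ (H i : ℝ) := Nat.cast_nonneg _
    nlinarith
  have hμ0 : 0 ≤ μ := le_trans (by positivity) hmuS
  have hEbound : Real.exp (2 * ε / 3) ≤ 1 + 2 * ε / 3 + ε ^ 2 / 3 := by
    have hx0 : (0:ℝ) ≤ 2 * ε / 3 := by linarith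
    have hx1 : 2 * ε / 3 ≤ 1 := by linarith
    have h := Real.exp_bound' hx0 hx1 (n := 2) (by norm_num)
    simp only [Finset.sum_range_succ, Finset.sum_range_zero, pow_zero, pow_one,
      Nat.factorial] at h
    norm_num at h
    nlinarith
  have hkey : -(s * a) + (Real.exp (s * B) - 1) * μ / B
      ≤ -(ε ^ 2 / 6) * ((∑ i, (H i : ℝ)) / B) := by
    rw [hsB, haμ]
    have h1 : (Real.exp (2 * ε / 3) - 1) * μ / B ≤ (2 * ε / 3 + ε ^ 2 / 3) * μ / B := by
      have hE1 : Real.exp (2 * ε / 3) - 1 ≤ 2 * ε / 3 + ε ^ 2 / 3 := by linarith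
      exact (div_le_div_iff_of_pos_right hB0).2 (mul_le_mul_of_nonneg_right hE1 hμ0)
    have h2 : -(s * ((1 + ε) * μ)) + (2 * ε / 3 + ε ^ 2 / 3) * μ / B
        = -(ε ^ 2 / 3) * (μ / B) := by
      rw [hsdef]; field_simp; ring
    have h3 : -(ε ^ 2 / 3) * (μ / B) ≤ -(ε ^ 2 / 6) * ((∑ i, (H i : ℝ)) / B) := by
      have h4 : (ε ^ 2 / 6) * ((∑ i, (H i : ℝ)) / B) ≤ (ε ^ 2 / 3) * (μ / B) := by
        calc (ε ^ 2 / 6) * ((∑ i, (H i : ℝ)) / B)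
            = (ε ^ 2 / 3) * (((∑ i, (H i : ℝ)) / 2) / B) := by ring
          _ ≤ (ε ^ 2 / 3) * (μ / B) :=
              mul_le_mul_of_nonneg_left ((div_le_div_iff_of_pos_right hB0).2 hmuS) (by positivity)
      linarith
    linarith
  calc (F.card : ℝ) ≤ Real.exp (-(s * a) + (Real.exp (s * B) - 1) * μ / B)
        * ∏ i, (T i : ℝ) := hmain
    _ ≤ Real.exp (-(ε ^ 2 / 6) * ((∑ i, (H i : ℝ)) / B)) * ∏ i, (T i : ℝ) := by
        apply mul_le_mul_of_nonneg_right (Real.exp_le_exp.2 hkey)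
        exact Finset.prod_nonneg fun i _ => Nat.cast_nonneg _
end

section
/- Let ε ∈ (0,1), let n be a positive integer with n ≥ 2/ε, and let p_1, …, p_n be distinct primes, each at least n; set Λ = ∏_{i=1}^n p_i. Then the number of integers t ∈ {0, …, Λ − 1} satisfying Σ_{i=1}^n (1 − (t mod p_i)/p_i) ≥ (1/2 + ε)·n is at most exp(−ε²n/6)·Λ. -/
open Finset Real

private lemma crt_sum {n : ℕ} (p : Fin n → ℕ) (hp : ∀ i, (p i).Prime)
    (hinj : Function.Injective p) (f : Fin n → ℕ → ℝ) :
    ∑ t ∈ Finset.range (∏ i, p i), ∏ i, f i (t % p i)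
      = ∏ i, ∑ r ∈ Finset.range (p i), f i r := by
  rw [Finset.prod_univ_sum]
  have hinjOn : ∀ t ∈ Finset.range (∏ i, p i), ∀ t' ∈ Finset.range (∏ i, p i),
      (fun i => t % p i) = (fun i => t' % p i) → t = t' := by
    intro t ht t' ht' h
    rw [Finset.mem_range] at ht ht'
    have hdvd : ∀ i : Fin n, ((p i : ℤ)) ∣ (t' : ℤ) - t := by
      intro i
      exact (Nat.modEq_iff_dvd (n := p i) (a := t) (b := t')).mp (congrFun h i)
    have hco : ((Finset.univ : Finset (Fin n)) : Set (Fin n)).Pairwise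
        (Function.onFun IsCoprime fun i => ((p i : ℤ))) := by
      intro i _ j _ hij
      have hc : Nat.Coprime (p i) (p j) :=
        (Nat.coprime_primes (hp i) (hp j)).mpr (fun e => hij (hinj e))
      exact Nat.isCoprime_iff_coprime.mpr hc
    have hprod : (∏ i, (p i : ℤ)) ∣ (t' : ℤ) - t :=
      Finset.prod_dvd_of_coprime hco (fun i _ => hdvd i)
    have hprod' : ((∏ i, p i : ℕ) : ℤ) ∣ (t' : ℤ) - t := by
      push_cast; exact hprod
    have habs : |(t' : ℤ) - t| < ((∏ i, p i : ℕ) : ℤ) := by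
      rw [abs_sub_lt_iff]
      omega
    have := Int.eq_zero_of_abs_lt_dvd hprod' habs
    omega
  have himg : (Finset.range (∏ i, p i)).image (fun t => fun i => t % p i)
      = Fintype.piFinset (fun i => Finset.range (p i)) := by
    apply Finset.eq_of_subset_of_card_le
    · intro g hg
      rw [Finset.mem_image] at hg
      obtain ⟨t, _, rfl⟩ := hg
      rw [Fintype.mem_piFinset]
      exact fun i => Finset.mem_range.mpr (Nat.mod_lt _ (hp i).pos)
    · rw [Finset.card_image_of_injOn (fun x hx y hy h => hinjOn x hx y hy h),
        Finset.card_range, Fintype.card_piFinset]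
      simp
  rw [← himg, Finset.sum_image hinjOn]

private lemma factor_bound (s : ℝ) (hs : 0 ≤ s) (P : ℕ) (hP : 0 < P) (μ : ℝ)
    (hμ : ((P : ℝ) + 1) / (2 * P) ≤ μ) :
    ∑ r ∈ Finset.range P, Real.exp (s * (1 - (r : ℝ) / P)) ≤
      (P : ℝ) * Real.exp (μ * (Real.exp s - 1)) := by
  have hP0 : (0 : ℝ) < P := by exact_mod_cast hP
  have hpt : ∀ r ∈ Finset.range P,
      Real.exp (s * (1 - (r : ℝ) / P)) ≤ 1 + (1 - (r : ℝ) / P) * (Real.exp s - 1) := by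
    intro r hr
    rw [Finset.mem_range] at hr
    set x : ℝ := 1 - (r : ℝ) / P with hx
    have hx0 : 0 ≤ x := by
      have h1 : (r : ℝ) / P ≤ 1 := by
        rw [div_le_one hP0]; exact_mod_cast hr.le
      rw [hx]; linarith
    have hx1 : x ≤ 1 := by
      have : 0 ≤ (r : ℝ) / P := by positivity
      rw [hx]; linarith
    have hconv := convexOn_exp.2 (Set.mem_univ (0 : ℝ)) (Set.mem_univ s)
      (by linarith : (0:ℝ) ≤ 1 - x) hx0 (by ring)
    simp only [smul_eq_mul, mul_zero, zero_add, Real.exp_zero, mul_one] at hconv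
    calc Real.exp (s * x) = Real.exp (x * s) := by ring_nf
      _ ≤ 1 - x + x * Real.exp s := hconv
      _ = 1 + x * (Real.exp s - 1) := by ring
  have hgauss : (∑ r ∈ Finset.range P, (r : ℝ)) = (P : ℝ) * ((P : ℝ) - 1) / 2 := by
    have h2 := congrArg (Nat.cast (R := ℝ)) (Finset.sum_range_id_mul_two P)
    push_cast [Nat.cast_sub hP] at h2
    linarith
  have hsum : ∑ r ∈ Finset.range P, ((1 : ℝ) + (1 - (r : ℝ) / P) * (Real.exp s - 1))
      = P + ((P : ℝ) + 1) / 2 * (Real.exp s - 1) := by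
    rw [Finset.sum_add_distrib, Finset.sum_const, Finset.card_range]
    simp only [nsmul_eq_mul, mul_one]
    rw [← Finset.sum_mul]
    congr 1
    have h3 : ∑ r ∈ Finset.range P, ((1 : ℝ) - (r : ℝ) / P)
        = P - (∑ r ∈ Finset.range P, (r : ℝ)) / P := by
      rw [Finset.sum_sub_distrib, Finset.sum_const, Finset.card_range, ← Finset.sum_div]
      simp
    rw [h3, hgauss]
    field_simp
    ring
  have hes : 0 ≤ Real.exp s - 1 := by
    have := Real.one_le_exp hs
    linarith
  calc ∑ r ∈ Finset.range P, Real.exp (s * (1 - (r : ℝ) / P))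
      ≤ ∑ r ∈ Finset.range P, ((1 : ℝ) + (1 - (r : ℝ) / P) * (Real.exp s - 1)) :=
        Finset.sum_le_sum hpt
    _ = P + ((P : ℝ) + 1) / 2 * (Real.exp s - 1) := hsum
    _ = (P : ℝ) * (1 + ((P : ℝ) + 1) / (2 * P) * (Real.exp s - 1)) := by
        field_simp
    _ ≤ (P : ℝ) * (1 + μ * (Real.exp s - 1)) := by
        apply mul_le_mul_of_nonneg_left _ hP0.le
        have := mul_le_mul_of_nonneg_right hμ hes
        linarith
    _ ≤ (P : ℝ) * Real.exp (μ * (Real.exp s - 1)) := by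
        apply mul_le_mul_of_nonneg_left _ hP0.le
        have := Real.add_one_le_exp (μ * (Real.exp s - 1))
        linarith

open Classical in
/-- Let `p_1,…,p_n` be distinct primes, each at least `n ≥ 2/ε`, and `Λ = ∏ p_i`.
The number of integers `t ∈ {0,…,Λ−1}` with `Σ_i (1 − (t mod p_i)/p_i) ≥ (1/2+ε)·n`
is at most `exp(−ε²n/6)·Λ`. -/
theorem stmt4 (ε : ℝ) (hε : ε ∈ Set.Ioo (0 : ℝ) 1) (n : ℕ) (hn : 0 < n)
    (hn2 : 2 / ε ≤ (n : ℝ)) (p : Fin n → ℕ) (hp : ∀ i, (p i).Prime)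
    (hinj : Function.Injective p) (hge : ∀ i, n ≤ p i) :
    (((Finset.range (∏ i, p i)).filter
        (fun t => ((1 : ℝ) / 2 + ε) * n ≤ ∑ i, (1 - ((t % p i : ℕ) : ℝ) / (p i : ℝ)))).card : ℝ)
      ≤ Real.exp (-(ε ^ 2) * n / 6) * ∏ i, (p i : ℝ) := by
  obtain ⟨hε0, hε1⟩ := hε
  have hn0 : (0 : ℝ) < n := by exact_mod_cast hn
  have hεn : 1 / (n : ℝ) ≤ ε / 2 := by
    rw [div_le_iff₀ hε0] at hn2
    rw [div_le_iff₀ hn0]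
    nlinarith
  have hεn' : 1 / (2 * (n : ℝ)) ≤ ε / 4 := by
    rw [div_le_iff₀ (by positivity)]
    rw [div_le_iff₀ hn0] at hεn
    nlinarith
  obtain ⟨δ, hδdef⟩ : ∃ δ : ℝ, δ = ε - 1 / (2 * n) := ⟨_, rfl⟩
  obtain ⟨s, hsdef⟩ : ∃ s : ℝ, s = 2 * δ / 3 := ⟨_, rfl⟩
  obtain ⟨μ, hμdef⟩ : ∃ μ : ℝ, μ = 1 / 2 + 1 / (2 * n) := ⟨_, rfl⟩
  have hpos2n : (0:ℝ) < 1 / (2 * (n:ℝ)) := by positivity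
  have hδlb : 3 * ε / 4 ≤ δ := by rw [hδdef]; linarith
  have hδub : δ ≤ ε := by rw [hδdef]; linarith
  have hδ0 : 0 < δ := by linarith
  have hs0 : 0 < s := by rw [hsdef]; linarith
  have hs1 : s ≤ 1 := by rw [hsdef]; linarith
  have hμub : μ ≤ 3 / 4 := by rw [hμdef]; linarith
  have hμ0 : 0 ≤ μ := by rw [hμdef]; linarith
  have hsplit : (1:ℝ)/2 + ε = μ + δ := by rw [hμdef, hδdef]; ring
  -- bound on exp s
  have hE : Real.exp s ≤ 1 + s + 3 / 4 * s ^ 2 := by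
    have h := Real.exp_bound' hs0.le hs1 (n := 2) (by norm_num)
    norm_num [Finset.sum_range_succ] at h
    nlinarith [h]
  -- per-prime factor bound
  have hfac : ∀ i : Fin n, ∑ r ∈ Finset.range (p i),
      Real.exp (s * (1 - (r : ℝ) / (p i : ℝ))) ≤
      (p i : ℝ) * Real.exp (μ * (Real.exp s - 1)) := by
    intro i
    apply factor_bound s hs0.le (p i) (hp i).pos μ
    have hpi0 : (0:ℝ) < (p i : ℝ) := by exact_mod_cast (hp i).pos
    have hni : (n:ℝ) ≤ (p i : ℝ) := by exact_mod_cast hge i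
    have heq : ((p i : ℝ) + 1) / (2 * (p i : ℝ)) = 1/2 + 1/(2 * (p i : ℝ)) := by
      field_simp
    have hle : 1/(2 * (p i : ℝ)) ≤ 1/(2 * (n : ℝ)) := by
      apply one_div_le_one_div_of_le (by positivity)
      linarith
    rw [heq, hμdef]
    linarith
  -- main chain
  have hΛpos : (0:ℝ) < ∏ i, (p i : ℝ) := by
    apply Finset.prod_pos
    intro i _
    exact_mod_cast (hp i).pos
  have key : -(s * (((1:ℝ)/2 + ε) * n)) + (n : ℝ) * (μ * (Real.exp s - 1))
      ≤ -(ε ^ 2) * n / 6 := by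
    have hunit : μ * (Real.exp s - 1) - s * ((1:ℝ)/2 + ε) ≤ -(ε ^ 2) / 6 := by
      rw [hsplit, hsdef]
      rw [hsdef] at hE
      have h5 : (3 * ε / 4) * (3 * ε / 4) ≤ δ * δ :=
        mul_le_mul hδlb hδlb (by linarith) (by linarith)
      have hh1 := mul_le_mul_of_nonneg_left hE hμ0
      have hh2 : 0 ≤ (3/4 - μ) * δ^2 :=
        mul_nonneg (by linarith) (sq_nonneg δ)
      nlinarith [hh1, hh2, h5]
    calc -(s * (((1:ℝ)/2 + ε) * n)) + (n : ℝ) * (μ * (Real.exp s - 1))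
        = (n:ℝ) * (μ * (Real.exp s - 1) - s * ((1:ℝ)/2 + ε)) := by ring
      _ ≤ (n:ℝ) * (-(ε ^ 2) / 6) := by
          exact mul_le_mul_of_nonneg_left hunit hn0.le
      _ = -(ε ^ 2) * n / 6 := by ring
  calc (((Finset.range (∏ i, p i)).filter
        (fun t => ((1 : ℝ) / 2 + ε) * n ≤ ∑ i, (1 - ((t % p i : ℕ) : ℝ) / (p i : ℝ)))).card : ℝ)
      = ∑ _t ∈ (Finset.range (∏ i, p i)).filter
          (fun t => ((1 : ℝ) / 2 + ε) * n ≤ ∑ i, (1 - ((t % p i : ℕ) : ℝ) / (p i : ℝ))),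
          (1 : ℝ) := by simp
    _ ≤ ∑ t ∈ (Finset.range (∏ i, p i)).filter
          (fun t => ((1 : ℝ) / 2 + ε) * n ≤ ∑ i, (1 - ((t % p i : ℕ) : ℝ) / (p i : ℝ))),
          Real.exp (s * ((∑ i, (1 - ((t % p i : ℕ) : ℝ) / (p i : ℝ))) - ((1:ℝ)/2 + ε) * n)) := by
        apply Finset.sum_le_sum
        intro t ht
        have hta := (Finset.mem_filter.mp ht).2
        exact Real.one_le_exp (mul_nonneg hs0.le (by linarith))
    _ ≤ ∑ t ∈ Finset.range (∏ i, p i),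
          Real.exp (s * ((∑ i, (1 - ((t % p i : ℕ) : ℝ) / (p i : ℝ))) - ((1:ℝ)/2 + ε) * n)) :=
        Finset.sum_le_sum_of_subset_of_nonneg (Finset.filter_subset _ _)
          (fun t _ _ => (Real.exp_pos _).le)
    _ = ∑ t ∈ Finset.range (∏ i, p i),
          Real.exp (-(s * (((1:ℝ)/2 + ε) * n))) *
            ∏ i, Real.exp (s * (1 - ((t % p i : ℕ) : ℝ) / (p i : ℝ))) := by
        apply Finset.sum_congr rfl
        intro t _
        rw [← Real.exp_sum, ← Real.exp_add]
        congr 1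
        rw [← Finset.mul_sum]
        ring
    _ = Real.exp (-(s * (((1:ℝ)/2 + ε) * n))) *
          ∑ t ∈ Finset.range (∏ i, p i),
            ∏ i, Real.exp (s * (1 - ((t % p i : ℕ) : ℝ) / (p i : ℝ))) := by
        rw [Finset.mul_sum]
    _ = Real.exp (-(s * (((1:ℝ)/2 + ε) * n))) *
          ∏ i, ∑ r ∈ Finset.range (p i), Real.exp (s * (1 - (r : ℝ) / (p i : ℝ))) := by
        exact congrArg _ (crt_sum p hp hinj (fun i r => Real.exp (s * (1 - (r : ℝ) / (p i : ℝ)))))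
    _ ≤ Real.exp (-(s * (((1:ℝ)/2 + ε) * n))) *
          ∏ i, ((p i : ℝ) * Real.exp (μ * (Real.exp s - 1))) := by
        apply mul_le_mul_of_nonneg_left _ (Real.exp_pos _).le
        apply Finset.prod_le_prod
        · intro i _
          exact Finset.sum_nonneg fun r _ => (Real.exp_pos _).le
        · intro i _
          exact hfac i
    _ = Real.exp (-(s * (((1:ℝ)/2 + ε) * n)) + (n : ℝ) * (μ * (Real.exp s - 1))) *
          ∏ i, (p i : ℝ) := by
        rw [Finset.prod_mul_distrib, Finset.prod_const, Finset.card_univ, Fintype.card_fin,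
          Real.exp_add, ← Real.exp_nat_mul]
        ring
    _ ≤ Real.exp (-(ε ^ 2) * n / 6) * ∏ i, (p i : ℝ) := by
        apply mul_le_mul_of_nonneg_right _ hΛpos.le
        exact Real.exp_le_exp.mpr key
end

section
/- Let ε ∈ (0,1), let n ≥ 2/ε, and let p_1, …, p_n be distinct primes, each at least n. Consider the discrete inventory staggering instance with T_i = p_i and H_i = 1 for all i, so Λ = ∏_{i=1}^n p_i. Then: (a) every integer shift vector τ satisfies I_max(τ) = n, so in particular the all-zeros vector τ* = 0 is an optimal shift vector with I_max(τ*) = n; and (b) for every positive integer M, the number of M-tuples (x_1, …, x_M) ∈ {0, …, Λ−1}^M satisfying max_{m∈[M]} Σ_{i=1}^n I_i(0, x_m) ≥ (1/2 + ε)·I_max(τ*) is at most M·exp(−ε²n/6)·Λ^M; equivalently, for M independent uniform samples X_1, …, X_M on {0, …, Λ−1}, P[max_{m∈[M]} Σ_{i=1}^n I_i(0, X_m) ≥ (1/2 + ε)·I_max(τ*)] ≤ M·exp(−ε²n/6). -/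
section Aux

variable {n : ℕ} {p : Fin n → ℕ}

lemma intPairwiseCoprime (hp : ∀ i, (p i).Prime) (hinj : Function.Injective p) :
    Pairwise (Function.onFun IsCoprime fun i => (p i : ℤ)) := fun i j hij =>
  Nat.isCoprime_iff_coprime.2 ((Nat.coprime_primes (hp i) (hp j)).2 fun h => hij (hinj h))

lemma cycleLen_eq_prod (hp : ∀ i, (p i).Prime) (hinj : Function.Injective p) :
    cycleLen p = ∏ i, p i := by
  refine Nat.dvd_antisymm
    (Finset.lcm_dvd fun i _ => Finset.dvd_prod_of_mem p (Finset.mem_univ i)) ?_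
  have h : ((∏ i, p i : ℕ) : ℤ) ∣ ((cycleLen p : ℕ) : ℤ) := by
    push_cast
    exact Fintype.prod_dvd_of_coprime (intPairwiseCoprime hp hinj)
      fun i => Int.natCast_dvd_natCast.2 (Finset.dvd_lcm (Finset.mem_univ i))
  exact_mod_cast h

def res (p : Fin n → ℕ) (hp0 : ∀ i, 0 < p i) (t : ℤ) (i : Fin n) : Fin (p i) :=
  ⟨(t % (p i : ℤ)).toNat, by
    have h0 : (0:ℤ) < (p i : ℤ) := by exact_mod_cast hp0 i
    have h1 : t % (p i : ℤ) < (p i : ℤ) := Int.emod_lt_of_pos t h0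
    have h2 : 0 ≤ t % (p i : ℤ) := Int.emod_nonneg t h0.ne'
    omega⟩

lemma res_cast (hp0 : ∀ i, 0 < p i) (t : ℤ) (i : Fin n) :
    ((res p hp0 t i : ℕ) : ℤ) = t % (p i : ℤ) :=
  Int.toNat_of_nonneg (Int.emod_nonneg t (by exact_mod_cast (hp0 i).ne'))

lemma res_bijective (hp : ∀ i, (p i).Prime) (hinj : Function.Injective p) :
    Function.Bijective (fun t : (Finset.Ico (0:ℤ) ((∏ i, p i : ℕ) : ℤ)) =>
      res p (fun i => (hp i).pos) (t : ℤ)) := by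
  rw [Fintype.bijective_iff_injective_and_card]
  constructor
  · rintro ⟨t, ht⟩ ⟨t', ht'⟩ h
    simp only [Finset.mem_Ico] at ht ht'
    have hmod : ∀ i, t % (p i : ℤ) = t' % (p i : ℤ) := fun i => by
      have h1 : ((res p (fun i => (hp i).pos) t i : ℕ) : ℤ)
          = ((res p (fun i => (hp i).pos) t' i : ℕ) : ℤ) := by
        exact_mod_cast congrArg (fun v => ((v i : ℕ) : ℤ)) h
      rwa [res_cast, res_cast] at h1
    have hdvd : ((∏ i, p i : ℕ) : ℤ) ∣ t' - t := by
      push_cast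
      exact Fintype.prod_dvd_of_coprime (intPairwiseCoprime hp hinj)
        fun i => Int.ModEq.dvd (hmod i)
    have h0 := Int.eq_zero_of_abs_lt_dvd hdvd
      (abs_lt.2 ⟨by linarith [ht.1, ht'.2], by linarith [ht'.1, ht.2]⟩)
    exact Subtype.ext (by linarith)
  · simp [Int.card_Ico, ← Nat.cast_prod]

lemma sum_res (hp : ∀ i, (p i).Prime) (hinj : Function.Injective p)
    (F : (∀ i, Fin (p i)) → ℝ) :
    ∑ t ∈ Finset.Ico (0:ℤ) ((∏ i, p i : ℕ) : ℤ), F (res p (fun i => (hp i).pos) t)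
      = ∑ v, F v := by
  rw [← Finset.sum_coe_sort]
  exact Function.Bijective.sum_comp (res_bijective hp hinj) F

lemma exists_res (hp : ∀ i, (p i).Prime) (hinj : Function.Injective p)
    (v : ∀ i, Fin (p i)) :
    ∃ t : ℤ, 0 ≤ t ∧ t < ((∏ i, p i : ℕ) : ℤ) ∧ ∀ i, t % (p i : ℤ) = ((v i : ℕ) : ℤ) := by
  obtain ⟨⟨t, ht⟩, h⟩ := (res_bijective hp hinj).surjective v
  simp only [Finset.mem_Ico] at ht
  refine ⟨t, ht.1, ht.2, fun i => ?_⟩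
  rw [← res_cast (fun i => (hp i).pos) t i]
  exact_mod_cast congrArg (fun w => ((w i : ℕ) : ℤ)) h

lemma invLevel_le_one {q : ℕ} (hq : 0 < q) (τ t : ℤ) : invLevel q 1 τ t ≤ 1 := by
  unfold invLevel
  have h0 : (0:ℤ) < (q : ℤ) := by exact_mod_cast hq
  have h2 : (0:ℤ) ≤ (t - τ) % (q : ℤ) := Int.emod_nonneg _ h0.ne'
  have h3 : (0:ℝ) ≤ (((t - τ) % (q : ℤ) : ℤ) : ℝ) / (q : ℝ) := by
    apply div_nonneg
    · exact_mod_cast h2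
    · positivity
  simp only [Nat.cast_one, one_mul]
  linarith

lemma Imax_eq_n (hp : ∀ i, (p i).Prime) (hinj : Function.Injective p) (τ : Fin n → ℤ) :
    Imax p (fun _ => 1) τ = (n : ℝ) := by
  have hp0 : ∀ i, 0 < p i := fun i => (hp i).pos
  have hP := cycleLen_eq_prod hp hinj
  apply IsGreatest.csSup_eq
  constructor
  · obtain ⟨t, ht0, htP, hmod⟩ := exists_res hp hinj (fun i =>
      ⟨(τ i % (p i : ℤ)).toNat, by
        have h0 : (0:ℤ) < (p i : ℤ) := by exact_mod_cast hp0 i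
        have h1 : τ i % (p i : ℤ) < (p i : ℤ) := Int.emod_lt_of_pos _ h0
        have h2 : 0 ≤ τ i % (p i : ℤ) := Int.emod_nonneg _ h0.ne'
        omega⟩)
    refine ⟨t, ?_, ?_⟩
    · rw [Set.mem_Ico, hP]
      exact ⟨ht0, htP⟩
    · unfold totalInv
      have hone : ∀ i, invLevel (p i) 1 (τ i) t = 1 := fun i => by
        have h0 : (0:ℤ) < (p i : ℤ) := by exact_mod_cast hp0 i
        have e1 : t % (p i : ℤ) = τ i % (p i : ℤ) := by
          rw [hmod i]
          simp only
          exact (Int.toNat_of_nonneg (Int.emod_nonneg _ h0.ne')).symm ▸ rfl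
        have e2 : (t - τ i) % (p i : ℤ) = 0 := by
          rw [Int.sub_emod, e1, sub_self, Int.zero_emod]
        unfold invLevel
        rw [e2]
        simp
      rw [Finset.sum_congr rfl fun i _ => hone i]
      simp
  · rintro y ⟨t, -, rfl⟩
    calc totalInv p (fun _ => 1) τ t ≤ ∑ _i : Fin n, (1:ℝ) :=
          Finset.sum_le_sum fun i _ => invLevel_le_one (hp0 i) (τ i) t
      _ = n := by simp

lemma sum_range_cast (m : ℕ) : ∑ k ∈ Finset.range m, (k : ℝ) = m * (m - 1) / 2 := by
  induction m with
  | zero => simp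
  | succ m ih =>
    rw [Finset.sum_range_succ, ih]
    push_cast
    ring

lemma exp_convex (l x : ℝ) (h0 : 0 ≤ x) (h1 : x ≤ 1) :
    Real.exp (l * x) ≤ 1 + (Real.exp l - 1) * x := by
  have h := convexOn_exp.2 (Set.mem_univ (0:ℝ)) (Set.mem_univ l)
    (by linarith : (0:ℝ) ≤ 1 - x) h0 (by ring)
  simp only [smul_eq_mul, mul_zero, zero_add, Real.exp_zero, mul_one] at h
  have e : 1 + (Real.exp l - 1) * x = (1 - x) + x * Real.exp l := by ring
  rw [e, mul_comm]
  exact h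

lemma mgf_bound (q : ℕ) (hq : 0 < q) (l : ℝ) :
    ∑ k : Fin q, Real.exp (l * (1 - (k : ℝ) / q))
      ≤ q * Real.exp ((Real.exp l - 1) * (((q : ℝ) + 1) / (2 * q))) := by
  have hq' : (0:ℝ) < q := by exact_mod_cast hq
  set c : ℝ := Real.exp l - 1 with hc
  have hsv : ∑ k : Fin q, ((k : ℕ) : ℝ) = q * ((q : ℝ) - 1) / 2 := by
    rw [Fin.sum_univ_eq_sum_range (fun k => ((k : ℕ) : ℝ)) q]
    exact sum_range_cast q
  have step1 : ∑ k : Fin q, Real.exp (l * (1 - (k : ℝ) / q))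
      ≤ ∑ k : Fin q, (1 + c * (1 - (k : ℝ) / q)) := by
    refine Finset.sum_le_sum fun k _ => exp_convex l _ ?_ ?_
    · have hk : (k : ℝ) < q := by exact_mod_cast k.isLt
      have : (k : ℝ) / q ≤ 1 := (div_le_one hq').2 hk.le
      linarith
    · have hk : (0:ℝ) ≤ (k : ℝ) / q := by positivity
      linarith
  have step2 : ∑ k : Fin q, (1 + c * (1 - (k : ℝ) / q)) = q + c * (((q : ℝ) + 1) / 2) := by
    have expand : ∀ k : Fin q, 1 + c * (1 - (k : ℝ) / q) = (1 + c) - (c / q) * ((k : ℕ) : ℝ) :=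
      fun k => by field_simp; ring
    rw [Finset.sum_congr rfl fun k _ => expand k, Finset.sum_sub_distrib, ← Finset.mul_sum, hsv,
      Finset.sum_const, Finset.card_univ, Fintype.card_fin, nsmul_eq_mul]
    field_simp
    ring
  have step3 : (q : ℝ) + c * (((q : ℝ) + 1) / 2)
      ≤ q * Real.exp (c * (((q : ℝ) + 1) / (2 * q))) := by
    have h4 : c * (((q : ℝ) + 1) / (2 * q)) + 1 ≤ Real.exp (c * (((q : ℝ) + 1) / (2 * q))) :=
      Real.add_one_le_exp _
    have h5 : (q : ℝ) * (c * (((q : ℝ) + 1) / (2 * q)) + 1)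
        ≤ q * Real.exp (c * (((q : ℝ) + 1) / (2 * q))) :=
      mul_le_mul_of_nonneg_left h4 hq'.le
    have h6 : (q : ℝ) + c * (((q : ℝ) + 1) / 2) = q * (c * (((q : ℝ) + 1) / (2 * q)) + 1) := by
      field_simp
      ring
    linarith
  calc ∑ k : Fin q, Real.exp (l * (1 - (k : ℝ) / q)) ≤ q + c * (((q : ℝ) + 1) / 2) := by
        rw [← step2]; exact step1
    _ ≤ q * Real.exp (c * (((q : ℝ) + 1) / (2 * q))) := step3

end Aux

open Classical in
/-- For the instance with `T_i = p_i` (distinct primes ≥ n ≥ 2/ε) and `H_i = 1`: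
(a) every shift vector has peak inventory level `n` (so `τ* = 0` is optimal), and
(b) the number of `M`-tuples of sample points in `{0,…,Λ−1}` whose sampled maximum
reaches `(1/2+ε)·I_max(τ*)` is at most `M·exp(−ε²n/6)·Λ^M`. -/
theorem stmt5 (ε : ℝ) (hε : ε ∈ Set.Ioo (0 : ℝ) 1) (n : ℕ) (hn : 0 < n)
    (hn2 : 2 / ε ≤ (n : ℝ)) (p : Fin n → ℕ) (hp : ∀ i, (p i).Prime)
    (hinj : Function.Injective p) (hge : ∀ i, n ≤ p i) :
    (∀ τ : Fin n → ℤ, Imax p (fun _ => 1) τ = n) ∧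
    (∀ M : ℕ, 0 < M →
      (((Fintype.piFinset fun _ : Fin M => Finset.Ico (0 : ℤ) ((∏ i, p i : ℕ) : ℤ)).filter
          (fun x => ∃ m, ((1 : ℝ) / 2 + ε) * Imax p (fun _ => 1) (fun _ => 0)
            ≤ ∑ i, invLevel (p i) 1 0 (x m))).card : ℝ)
        ≤ M * Real.exp (-(ε ^ 2) * n / 6) * (∏ i, (p i : ℝ)) ^ M) := by
  classical
  obtain ⟨hε0, hε1⟩ := hε
  have hp0 : ∀ i, 0 < p i := fun i => (hp i).pos
  have hImax : ∀ τ : Fin n → ℤ, Imax p (fun _ => 1) τ = (n : ℝ) := fun τ => Imax_eq_n hp hinj τ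
  refine ⟨hImax, ?_⟩
  intro M hM
  set P : ℕ := ∏ i, p i with hPdef
  have hPpos : 0 < P := Finset.prod_pos fun i _ => hp0 i
  have hPR : (0:ℝ) < (P : ℝ) := by exact_mod_cast hPpos
  have hεn : 2 ≤ ε * (n : ℝ) := by
    rw [div_le_iff₀ hε0] at hn2
    linarith
  have hn1 : (1:ℝ) ≤ (n : ℝ) := by exact_mod_cast hn
  set l : ℝ := ε / 2 with hl
  have hl0 : 0 ≤ l := by rw [hl]; linarith
  set S : Finset ℤ := (Finset.Ico (0:ℤ) (P:ℤ)).filter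
    (fun t => ((1:ℝ)/2 + ε) * (n : ℝ) ≤ ∑ i, invLevel (p i) 1 0 t) with hSdef
  -- Chernoff bound on the per-point bad set
  have key : (S.card : ℝ) ≤ Real.exp (-(ε ^ 2) * (n : ℝ) / 6) * P := by
    set c : ℝ := Real.exp l - 1 with hc
    have hc0 : 0 ≤ c := by
      rw [hc]
      have := Real.one_le_exp hl0
      linarith
    -- exp of a bad point is large
    have hchain : (S.card : ℝ) * Real.exp (l * (((1:ℝ)/2 + ε) * n))
        ≤ (P : ℝ) * Real.exp (c * (((n:ℝ) + 1) / 2)) := by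
      have h2 : (S.card : ℝ) * Real.exp (l * (((1:ℝ)/2 + ε) * n))
          ≤ ∑ t ∈ S, Real.exp (l * ∑ i, invLevel (p i) 1 0 t) := by
        have := Finset.card_nsmul_le_sum S (fun t => Real.exp (l * ∑ i, invLevel (p i) 1 0 t))
          (Real.exp (l * (((1:ℝ)/2 + ε) * n))) (fun t ht => by
            have hW := (Finset.mem_filter.1 ht).2
            exact Real.exp_le_exp.2 (mul_le_mul_of_nonneg_left hW hl0))
        simpa [nsmul_eq_mul] using this
      have h3 : ∑ t ∈ S, Real.exp (l * ∑ i, invLevel (p i) 1 0 t)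
          ≤ ∑ t ∈ Finset.Ico (0:ℤ) (P:ℤ), Real.exp (l * ∑ i, invLevel (p i) 1 0 t) :=
        Finset.sum_le_sum_of_subset_of_nonneg (Finset.filter_subset _ _)
          (fun t _ _ => (Real.exp_pos _).le)
      have h4 : ∑ t ∈ Finset.Ico (0:ℤ) (P:ℤ), Real.exp (l * ∑ i, invLevel (p i) 1 0 t)
          = ∑ v : (∀ i, Fin (p i)), ∏ i, Real.exp (l * (1 - ((v i : ℕ) : ℝ) / (p i))) := by
        have hWres : ∀ t : ℤ, Real.exp (l * ∑ i, invLevel (p i) 1 0 t)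
            = ∏ i, Real.exp (l * (1 - ((res p hp0 t i : ℕ) : ℝ) / (p i))) := fun t => by
          rw [Finset.mul_sum, Real.exp_sum]
          refine Finset.prod_congr rfl fun i _ => ?_
          have hcast : ((res p hp0 t i : ℕ) : ℝ) = (((t - 0) % (p i : ℤ) : ℤ) : ℝ) := by
            rw [sub_zero]
            exact_mod_cast congrArg (Int.cast : ℤ → ℝ) (res_cast hp0 t i)
          unfold invLevel
          rw [hcast]
          norm_num
        rw [Finset.sum_congr rfl fun t _ => hWres t]
        exact sum_res hp hinj (fun v => ∏ i, Real.exp (l * (1 - ((v i : ℕ) : ℝ) / (p i))))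
      have h5 : ∑ v : (∀ i, Fin (p i)), ∏ i, Real.exp (l * (1 - ((v i : ℕ) : ℝ) / (p i)))
          = ∏ i, ∑ k : Fin (p i), Real.exp (l * (1 - ((k : ℕ) : ℝ) / (p i))) := by
        rw [← Fintype.piFinset_univ]
        exact (Finset.prod_univ_sum (fun i : Fin n => (Finset.univ : Finset (Fin (p i))))
          (fun i (k : Fin (p i)) => Real.exp (l * (1 - ((k : ℕ) : ℝ) / (p i))))).symm
      have h6 : ∏ i, ∑ k : Fin (p i), Real.exp (l * (1 - ((k : ℕ) : ℝ) / (p i)))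
          ≤ ∏ i, ((p i : ℝ) * Real.exp (c * (((p i : ℝ) + 1) / (2 * (p i : ℝ))))) := by
        refine Finset.prod_le_prod (fun i _ => Finset.sum_nonneg fun k _ => (Real.exp_pos _).le)
          (fun i _ => ?_)
        exact mgf_bound (p i) (hp0 i) l
      have h7 : ∏ i, ((p i : ℝ) * Real.exp (c * (((p i : ℝ) + 1) / (2 * (p i : ℝ)))))
          = (P : ℝ) * Real.exp (∑ i, c * (((p i : ℝ) + 1) / (2 * (p i : ℝ)))) := by
        rw [Finset.prod_mul_distrib, ← Real.exp_sum, hPdef]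
        push_cast
        ring
      have h8 : ∑ i, c * (((p i : ℝ) + 1) / (2 * (p i : ℝ))) ≤ c * (((n:ℝ) + 1) / 2) := by
        have hterm : ∀ i, ((p i : ℝ) + 1) / (2 * (p i : ℝ)) ≤ 1/2 + 1/(2 * (n : ℝ)) := by
          intro i
          have hpn : (n : ℝ) ≤ (p i : ℝ) := by exact_mod_cast hge i
          have hppos : (0:ℝ) < (p i : ℝ) := by exact_mod_cast hp0 i
          have hnpos : (0:ℝ) < (n : ℝ) := by linarith
          rw [div_le_iff₀ (by positivity)]
          have h1p : 1/(2 * (n:ℝ)) * (2 * (p i : ℝ)) = (p i : ℝ) / (n : ℝ) := by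
            field_simp
          have : (1:ℝ) ≤ (p i : ℝ) / (n : ℝ) := (one_le_div hnpos).2 hpn
          nlinarith
        calc ∑ i, c * (((p i : ℝ) + 1) / (2 * (p i : ℝ)))
            ≤ ∑ _i : Fin n, c * (1/2 + 1/(2 * (n : ℝ))) :=
              Finset.sum_le_sum fun i _ => mul_le_mul_of_nonneg_left (hterm i) hc0
          _ = (n : ℝ) * (c * (1/2 + 1/(2 * (n : ℝ)))) := by
              rw [Finset.sum_const, Finset.card_univ, Fintype.card_fin, nsmul_eq_mul]
          _ = c * (((n:ℝ) + 1) / 2) := by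
              field_simp
      calc (S.card : ℝ) * Real.exp (l * (((1:ℝ)/2 + ε) * n))
          ≤ ∑ t ∈ Finset.Ico (0:ℤ) (P:ℤ), Real.exp (l * ∑ i, invLevel (p i) 1 0 t) :=
            h2.trans h3
        _ = ∏ i, ∑ k : Fin (p i), Real.exp (l * (1 - ((k : ℕ) : ℝ) / (p i))) := by
            rw [h4, h5]
        _ ≤ (P : ℝ) * Real.exp (∑ i, c * (((p i : ℝ) + 1) / (2 * (p i : ℝ)))) := by
            rw [← h7]; exact h6
        _ ≤ (P : ℝ) * Real.exp (c * (((n:ℝ) + 1) / 2)) := by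
            exact mul_le_mul_of_nonneg_left (Real.exp_le_exp.2 h8) hPR.le
    -- numeric estimate on the exponent
    have hexp : Real.exp l ≤ 1 + l + 3/4 * l^2 := by
      have habs : |l| ≤ 1 := by rw [abs_of_nonneg hl0, hl]; linarith
      have hb := Real.exp_bound habs (n := 2) (by norm_num)
      have h2 : ∑ m ∈ Finset.range 2, l ^ m / (Nat.factorial m) = 1 + l := by
        simp [Finset.sum_range_succ]
      rw [h2] at hb
      have hb2 := (abs_le.1 hb).2
      rw [abs_of_nonneg hl0] at hb2
      norm_num [Nat.factorial] at hb2
      linarith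
    have hfinal : c * (((n:ℝ) + 1) / 2) - l * (((1:ℝ)/2 + ε) * n) ≤ -(ε ^ 2) * (n : ℝ) / 6 := by
      have hc2 : c ≤ l + 3/4 * l^2 := by rw [hc]; linarith
      have hn0 : (0:ℝ) ≤ ((n:ℝ) + 1) / 2 := by linarith
      have step : c * (((n:ℝ) + 1) / 2) ≤ (l + 3/4 * l^2) * (((n:ℝ) + 1) / 2) :=
        mul_le_mul_of_nonneg_right hc2 hn0
      have : (l + 3/4 * l^2) * (((n:ℝ) + 1) / 2) - l * (((1:ℝ)/2 + ε) * n)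
          ≤ -(ε ^ 2) * (n : ℝ) / 6 := by
        rw [hl]
        nlinarith [mul_nonneg (sub_nonneg.2 hεn) hε0.le,
          mul_nonneg (sub_nonneg.2 hε1.le) hε0.le, hε0.le, sq_nonneg ε]
      linarith
    have hepos := Real.exp_pos (l * (((1:ℝ)/2 + ε) * n))
    rw [← le_div_iff₀ hepos] at hchain
    have heq : (P : ℝ) * Real.exp (c * (((n:ℝ) + 1) / 2)) / Real.exp (l * (((1:ℝ)/2 + ε) * n))
        = (P : ℝ) * Real.exp (c * (((n:ℝ) + 1) / 2) - l * (((1:ℝ)/2 + ε) * n)) := by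
      rw [Real.exp_sub]
      ring
    rw [heq] at hchain
    calc (S.card : ℝ)
        ≤ (P : ℝ) * Real.exp (c * (((n:ℝ) + 1) / 2) - l * (((1:ℝ)/2 + ε) * n)) := hchain
      _ ≤ (P : ℝ) * Real.exp (-(ε ^ 2) * (n : ℝ) / 6) :=
          mul_le_mul_of_nonneg_left (Real.exp_le_exp.2 hfinal) hPR.le
      _ = Real.exp (-(ε ^ 2) * (n : ℝ) / 6) * P := mul_comm _ _
  -- Union bound over the M coordinates
  simp only [hImax]
  have hsub : (Fintype.piFinset fun _ : Fin M => Finset.Ico (0:ℤ) (P:ℤ)).filter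
        (fun x => ∃ m, ((1:ℝ)/2 + ε) * (n : ℝ) ≤ ∑ i, invLevel (p i) 1 0 (x m))
      ⊆ Finset.univ.biUnion (fun m : Fin M =>
        (Fintype.piFinset fun _ : Fin M => Finset.Ico (0:ℤ) (P:ℤ)).filter
          (fun x => ((1:ℝ)/2 + ε) * (n : ℝ) ≤ ∑ i, invLevel (p i) 1 0 (x m))) := by
    intro x hx
    rw [Finset.mem_filter] at hx
    obtain ⟨hx1, m, hm⟩ := hx
    exact Finset.mem_biUnion.2 ⟨m, Finset.mem_univ m, Finset.mem_filter.2 ⟨hx1, hm⟩⟩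
  have hcard : ∀ m : Fin M,
      ((Fintype.piFinset fun _ : Fin M => Finset.Ico (0:ℤ) (P:ℤ)).filter
        (fun x => ((1:ℝ)/2 + ε) * (n : ℝ) ≤ ∑ i, invLevel (p i) 1 0 (x m))).card
      = S.card * P ^ (M - 1) := by
    intro m
    have hset : (Fintype.piFinset fun _ : Fin M => Finset.Ico (0:ℤ) (P:ℤ)).filter
          (fun x => ((1:ℝ)/2 + ε) * (n : ℝ) ≤ ∑ i, invLevel (p i) 1 0 (x m))
        = Fintype.piFinset (fun m' : Fin M =>
            if m' = m then S else Finset.Ico (0:ℤ) (P:ℤ)) := by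
      ext x
      simp only [Finset.mem_filter, Fintype.mem_piFinset]
      constructor
      · rintro ⟨h1, h2⟩ m'
        by_cases hmm : m' = m
        · subst hmm
          rw [if_pos rfl, hSdef, Finset.mem_filter]
          exact ⟨h1 m', h2⟩
        · rw [if_neg hmm]
          exact h1 m'
      · intro h
        have hm := h m
        rw [if_pos rfl, hSdef, Finset.mem_filter] at hm
        refine ⟨fun m' => ?_, hm.2⟩
        by_cases hmm : m' = m
        · subst hmm
          exact hm.1
        · have := h m'
          rwa [if_neg hmm] at this
    rw [hset, Fintype.card_piFinset,
      ← Finset.mul_prod_erase _ _ (Finset.mem_univ m), if_pos rfl]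
    congr 1
    have hrest : ∀ m' ∈ Finset.univ.erase m,
        ((if m' = m then S else Finset.Ico (0:ℤ) (P:ℤ))).card = P := by
      intro m' hm'
      rw [if_neg (Finset.ne_of_mem_erase hm')]
      simp [Int.card_Ico]
    rw [Finset.prod_congr rfl hrest, Finset.prod_const,
      Finset.card_erase_of_mem (Finset.mem_univ m), Finset.card_univ, Fintype.card_fin]
  have hle1 := Finset.card_le_card hsub
  have hle2 := Finset.card_biUnion_le (s := (Finset.univ : Finset (Fin M)))
    (t := fun m : Fin M =>
      (Fintype.piFinset fun _ : Fin M => Finset.Ico (0:ℤ) (P:ℤ)).filter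
        (fun x => ((1:ℝ)/2 + ε) * (n : ℝ) ≤ ∑ i, invLevel (p i) 1 0 (x m)))
  have hsum : ∑ m : Fin M, ((Fintype.piFinset fun _ : Fin M => Finset.Ico (0:ℤ) (P:ℤ)).filter
        (fun x => ((1:ℝ)/2 + ε) * (n : ℝ) ≤ ∑ i, invLevel (p i) 1 0 (x m))).card
      = M * (S.card * P ^ (M - 1)) := by
    rw [Finset.sum_congr rfl fun m _ => hcard m, Finset.sum_const, Finset.card_univ,
      Fintype.card_fin, smul_eq_mul]
  have hNat : ((Fintype.piFinset fun _ : Fin M => Finset.Ico (0:ℤ) (P:ℤ)).filter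
        (fun x => ∃ m, ((1:ℝ)/2 + ε) * (n : ℝ) ≤ ∑ i, invLevel (p i) 1 0 (x m))).card
      ≤ M * (S.card * P ^ (M - 1)) := by
    rw [← hsum]
    exact hle1.trans hle2
  have hR : (((Fintype.piFinset fun _ : Fin M => Finset.Ico (0:ℤ) (P:ℤ)).filter
        (fun x => ∃ m, ((1:ℝ)/2 + ε) * (n : ℝ) ≤ ∑ i, invLevel (p i) 1 0 (x m))).card : ℝ)
      ≤ (M : ℝ) * ((S.card : ℝ) * (P : ℝ) ^ (M - 1)) := by
    exact_mod_cast hNat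
  have hfin : (M : ℝ) * ((S.card : ℝ) * (P : ℝ) ^ (M - 1))
      ≤ (M : ℝ) * Real.exp (-(ε ^ 2) * (n : ℝ) / 6) * (P : ℝ) ^ M := by
    have hM0 : (0:ℝ) ≤ (M : ℝ) := by positivity
    have hpow : (0:ℝ) ≤ (P : ℝ) ^ (M - 1) := by positivity
    have h1 : (S.card : ℝ) * (P : ℝ) ^ (M - 1)
        ≤ (Real.exp (-(ε ^ 2) * (n : ℝ) / 6) * P) * (P : ℝ) ^ (M - 1) :=
      mul_le_mul_of_nonneg_right key hpow
    have h2 : (Real.exp (-(ε ^ 2) * (n : ℝ) / 6) * P) * (P : ℝ) ^ (M - 1)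
        = Real.exp (-(ε ^ 2) * (n : ℝ) / 6) * (P : ℝ) ^ M := by
      have hM' : M - 1 + 1 = M := Nat.sub_add_cancel hM
      have hpp : (P : ℝ) * (P : ℝ) ^ (M - 1) = (P : ℝ) ^ M := by
        calc (P : ℝ) * (P : ℝ) ^ (M - 1) = (P : ℝ) ^ (M - 1 + 1) := (pow_succ' _ _).symm
          _ = (P : ℝ) ^ M := by rw [hM']
      rw [mul_assoc, hpp]
    calc (M : ℝ) * ((S.card : ℝ) * (P : ℝ) ^ (M - 1))
        ≤ (M : ℝ) * ((Real.exp (-(ε ^ 2) * (n : ℝ) / 6) * P) * (P : ℝ) ^ (M - 1)) :=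
          mul_le_mul_of_nonneg_left h1 hM0
      _ = (M : ℝ) * Real.exp (-(ε ^ 2) * (n : ℝ) / 6) * (P : ℝ) ^ M := by
          rw [h2]; ring
  have hprodcast : (∏ i, (p i : ℝ)) = (P : ℝ) := by
    rw [hPdef]
    push_cast
    rfl
  rw [hprodcast]
  exact hR.trans hfin
end

section
/- For every prime power q and every integer r with 2 ≤ r ≤ q, there exists a family F of subsets of a ground set of size q² such that |F| ≥ q^r, every member of F has exactly q elements, and any two distinct members of F intersect in at most r − 1 elements. -/
open Polynomial Finset

/-- For every prime power `q` and `2 ≤ r ≤ q`, there is a family of at least `q^r`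
many `q`-element subsets of a ground set of size `q²`, any two distinct members of
which intersect in at most `r − 1` elements. -/
theorem stmt6 (q r : ℕ) (hq : IsPrimePow q) (hr : 2 ≤ r) (hrq : r ≤ q) :
    ∃ F : Finset (Finset (Fin (q ^ 2))),
      q ^ r ≤ F.card ∧ (∀ S ∈ F, S.card = q) ∧
      (∀ S ∈ F, ∀ S' ∈ F, S ≠ S' → (S ∩ S').card ≤ r - 1) := by
  classical
  obtain ⟨p, n, hp, hn, rfl⟩ := hq
  haveI : Fact p.Prime := ⟨hp.nat_prime⟩
  set q := p ^ n with hqdef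
  let K : Type := GaloisField p n
  haveI : Field K := inferInstanceAs (Field (GaloisField p n))
  haveI : Fintype K := Fintype.ofFinite K
  haveI : DecidableEq K := inferInstanceAs (DecidableEq (GaloisField p n))
  have hcard : Fintype.card K = q := by
    rw [← Nat.card_eq_fintype_card]; exact GaloisField.card p n hn.ne'
  have e : K × K ≃ Fin (q ^ 2) := Fintype.equivFinOfCardEq (by
    simp [hcard, sq])
  -- polynomials
  let P : (Fin r → K) → K[X] := fun c => ∑ i : Fin r, C (c i) * X ^ (i : ℕ)
  have hcoeff : ∀ c (i : Fin r), (P c).coeff (i : ℕ) = c i := by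
    intro c i
    simp only [P, finset_sum_coeff, coeff_C_mul, coeff_X_pow]
    rw [Finset.sum_eq_single i] <;> simp +contextual [Fin.val_eq_val, eq_comm]
  have hPinj : Function.Injective P := by
    intro c c' h
    funext i
    rw [← hcoeff c i, ← hcoeff c' i, h]
  have hdeg : ∀ c, (P c).natDegree < r := by
    intro c
    by_cases h0 : P c = 0
    · simpa [h0] using lt_of_lt_of_le two_pos hr
    · rw [natDegree_lt_iff_degree_lt h0]
      apply lt_of_le_of_lt (degree_sum_le _ _)
      refine (Finset.sup_lt_iff (α := WithBot ℕ) (WithBot.bot_lt_coe r)).mpr ?_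
      intro i _
      exact lt_of_le_of_lt (degree_C_mul_X_pow_le _ _) (by exact_mod_cast i.isLt : ((i : ℕ) : WithBot ℕ) < (r : WithBot ℕ))
  -- the family
  let f : (Fin r → K) → Finset (Fin (q ^ 2)) :=
    fun c => Finset.univ.image fun x : K => e (x, (P c).eval x)
  have hmemf : ∀ c y, y ∈ f c ↔ ∃ x : K, e (x, (P c).eval x) = y := by
    intro c y; simp [f]
  have hevalinj : ∀ c, Function.Injective fun x : K => e (x, (P c).eval x) := by
    intro c x y h
    have := e.injective h
    exact (Prod.mk.injEq _ _ _ _).mp this |>.1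
  have hfinj : Function.Injective f := by
    intro c c' h
    apply hPinj
    have heq : ∀ x : K, (P c).eval x = (P c').eval x := by
      intro x
      have hx : e (x, (P c).eval x) ∈ f c' := by
        rw [← h, hmemf]; exact ⟨x, rfl⟩
      obtain ⟨y, hy⟩ := (hmemf c' _).mp hx
      have := e.injective hy
      obtain ⟨h1, h2⟩ := (Prod.mk.injEq _ _ _ _).mp this
      rw [h1] at h2; exact h2.symm
    have hz : P c - P c' = 0 := by
      apply eq_zero_of_natDegree_lt_card_of_eval_eq_zero _ (Function.injective_id)
      · intro x; simp [heq x]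
      · calc (P c - P c').natDegree ≤ max (P c).natDegree (P c').natDegree :=
              natDegree_sub_le _ _
          _ < r := max_lt (hdeg c) (hdeg c')
          _ ≤ q := hrq
          _ = Fintype.card K := hcard.symm
    exact sub_eq_zero.mp hz
  refine ⟨Finset.univ.image f, ?_, ?_, ?_⟩
  · rw [Finset.card_image_of_injective _ hfinj]
    simp [hcard]
  · rintro S hS
    obtain ⟨c, -, rfl⟩ := Finset.mem_image.mp hS
    rw [Finset.card_image_of_injective _ (hevalinj c), Finset.card_univ, hcard]
  · rintro S hS S' hS' hne
    obtain ⟨c, -, rfl⟩ := Finset.mem_image.mp hS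
    obtain ⟨c', -, rfl⟩ := Finset.mem_image.mp hS'
    have hcc : c ≠ c' := fun h => hne (by rw [h])
    have hPne : P c - P c' ≠ 0 := sub_ne_zero.mpr (fun h => hcc (hPinj h))
    have hsub : f c ∩ f c' ⊆
        (Finset.univ.filter fun x : K => (P c).eval x = (P c').eval x).image
          (fun x : K => e (x, (P c).eval x)) := by
      intro y hy
      obtain ⟨hy1, hy2⟩ := Finset.mem_inter.mp hy
      obtain ⟨x, hx⟩ := (hmemf c y).mp hy1
      obtain ⟨x', hx'⟩ := (hmemf c' y).mp hy2
      rw [← hx'] at hx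
      obtain ⟨h1, h2⟩ := (Prod.mk.injEq _ _ _ _).mp (e.injective hx)
      subst h1
      refine Finset.mem_image.mpr ⟨x, Finset.mem_filter.mpr ⟨Finset.mem_univ _, h2⟩, ?_⟩
      rw [h2, hx']
    calc (f c ∩ f c').card ≤ _ := Finset.card_le_card hsub
      _ ≤ (Finset.univ.filter fun x : K => (P c).eval x = (P c').eval x).card :=
          Finset.card_image_le
      _ ≤ (P c - P c').roots.toFinset.card := by
          apply Finset.card_le_card
          intro x hx
          obtain ⟨-, hx⟩ := Finset.mem_filter.mp hx
          rw [Multiset.mem_toFinset, mem_roots hPne]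
          simp [IsRoot, hx]
      _ ≤ (P c - P c').roots.card := Multiset.toFinset_card_le _
      _ ≤ (P c - P c').natDegree := card_roots' _
      _ ≤ r - 1 := by
          have : (P c - P c').natDegree < r :=
            lt_of_le_of_lt (natDegree_sub_le _ _) (max_lt (hdeg c) (hdeg c'))
          omega
end

section
/- Let ε ∈ (0,1) and consider a discrete inventory staggering instance with n items whose time intervals T_1, …, T_n admit primes p_1, …, p_n such that for every i ∈ [n]: p_i ≥ 1/ε, p_i divides T_i, and p_i does not divide T_k for every k ≠ i. Then every integer shift vector τ ∈ ℤ^n satisfies I_max(τ) ≥ (1 − ε)·H_Σ; in particular, OPT^disc ≥ (1 − ε)·H_Σ. -/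
/-- Chinese remainder theorem for a family of congruences modulo distinct primes. -/
lemma crt_primes {n : ℕ} (p : Fin n → ℕ) (hp : ∀ i, (p i).Prime)
    (hinj : Function.Injective p) (a : Fin n → ℤ) :
    ∃ u : ℤ, ∀ i, (p i : ℤ) ∣ u - a i := by
  suffices h : ∀ s : Finset (Fin n), ∃ u : ℤ, ∀ i ∈ s, (p i : ℤ) ∣ u - a i by
    obtain ⟨u, hu⟩ := h Finset.univ
    exact ⟨u, fun i => hu i (Finset.mem_univ i)⟩
  intro s
  induction s using Finset.induction_on with
  | empty => exact ⟨0, by simp⟩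
  | @insert j s hj ih =>
    obtain ⟨u, hu⟩ := ih
    haveI : Fact (p j).Prime := ⟨hp j⟩
    set Q : ℕ := ∏ i ∈ s, p i with hQdef
    have hQnd : ¬ p j ∣ Q := by
      intro h
      obtain ⟨i, hi, hd⟩ := ((hp j).prime.dvd_finset_prod_iff _).mp h
      exact hj (hinj ((Nat.prime_dvd_prime_iff_eq (hp j) (hp i)).mp hd) ▸ hi)
    have hQ0 : (Q : ZMod (p j)) ≠ 0 := by
      rw [Ne, ZMod.natCast_eq_zero_iff]
      exact hQnd
    set w : ZMod (p j) := (((a j - u : ℤ)) : ZMod (p j)) * (Q : ZMod (p j))⁻¹ with hwdef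
    refine ⟨u + (Q : ℤ) * (w.val : ℤ), ?_⟩
    intro i hi
    rcases Finset.mem_insert.mp hi with rfl | hi
    · rw [← ZMod.intCast_zmod_eq_zero_iff_dvd]
      have hval : ((w.val : ℕ) : ZMod (p i)) = w := ZMod.natCast_rightInverse w
      push_cast
      rw [hval, hwdef]
      field_simp
      push_cast
      ring
    · have h1 : (p i : ℤ) ∣ u - a i := hu i hi
      have h2 : (p i : ℤ) ∣ (Q : ℤ) := Int.natCast_dvd_natCast.mpr (Finset.dvd_prod_of_mem _ hi)
      have : u + (Q : ℤ) * (w.val : ℤ) - a i = (u - a i) + (Q : ℤ) * (w.val : ℤ) := by ring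
      rw [this]
      exact dvd_add h1 (h2.mul_right _)

/-- Key synchronization: there is a time at which every item's phase is at most `T i / p i`. -/
lemma exists_sync {n : ℕ} (T : Fin n → ℕ) (hT : ∀ i, 0 < T i)
    (p : Fin n → ℕ) (hp : ∀ i, (p i).Prime) (hdvd : ∀ i, p i ∣ T i)
    (hnd : ∀ i k, k ≠ i → ¬ p i ∣ T k) (τ : Fin n → ℤ) :
    ∃ t : ℤ, ∀ i, (t - τ i) % (T i : ℤ) ≤ (T i / p i : ℕ) := by
  have hinj : Function.Injective p := by
    intro i k hik
    by_contra hne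
    exact hnd i k (Ne.symm hne) (hik ▸ hdvd k)
  set m : Fin n → ℕ := fun i => T i / p i with hm
  have hTm : ∀ i, (T i : ℤ) = (p i : ℤ) * (m i : ℤ) := by
    intro i
    exact_mod_cast (Nat.mul_div_cancel' (hdvd i)).symm
  have hm0 : ∀ i, 0 < m i :=
    fun i => Nat.div_pos (Nat.le_of_dvd (hT i) (hdvd i)) (hp i).pos
  -- coefficients
  set C : Fin n → ℤ := fun i => ∏ k ∈ Finset.univ.erase i, (m k : ℤ) with hC
  set d : Fin n → ℤ := fun i => τ i / (m i : ℤ) + 1 with hd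
  have hCne : ∀ i, ((C i : ℤ) : ZMod (p i)) ≠ 0 := by
    intro i
    haveI : Fact (p i).Prime := ⟨hp i⟩
    rw [Ne, ZMod.intCast_zmod_eq_zero_iff_dvd]
    intro h
    obtain ⟨k, hk, hdk⟩ := ((Nat.prime_iff_prime_int.mp (hp i)).dvd_finset_prod_iff _).mp h
    have hki : k ≠ i := (Finset.mem_erase.mp hk).1
    have : (p i : ℤ) ∣ (T k : ℤ) := hdk.trans ⟨(p k : ℤ), by rw [hTm k]; ring⟩
    exact hnd i k hki (Int.natCast_dvd_natCast.mp this)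
  -- solve u ≡ C i⁻¹ d i  (mod p i)
  set a : Fin n → ℤ := fun i =>
    haveI : Fact (p i).Prime := ⟨hp i⟩
    ((((d i : ℤ) : ZMod (p i)) * (((C i : ℤ) : ZMod (p i)))⁻¹).val : ℤ) with ha
  obtain ⟨u, hu⟩ := crt_primes p hp hinj a
  have hlin : ∀ i, (p i : ℤ) ∣ C i * u - d i := by
    intro i
    haveI : Fact (p i).Prime := ⟨hp i⟩
    haveI : NeZero (p i) := ⟨(hp i).ne_zero⟩
    rw [← ZMod.intCast_zmod_eq_zero_iff_dvd]
    have h1 : ((u : ℤ) : ZMod (p i)) = ((a i : ℤ) : ZMod (p i)) := by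
      have := hu i
      have h0 : (((u - a i : ℤ)) : ZMod (p i)) = 0 :=
        (ZMod.intCast_zmod_eq_zero_iff_dvd _ _).mpr this
      push_cast at h0 ⊢
      linear_combination h0
    have hvala : ((a i : ℤ) : ZMod (p i))
        = (((d i : ℤ) : ZMod (p i)) * (((C i : ℤ) : ZMod (p i)))⁻¹) := by
      rw [ha]
      push_cast
      exact ZMod.natCast_rightInverse _
    push_cast
    rw [h1, hvala]
    field_simp [hCne i]
    ring
  -- t := (∏ m) * u
  refine ⟨(∏ k, (m k : ℤ)) * u, ?_⟩
  intro i
  have hMC : (∏ k, (m k : ℤ)) = (m i : ℤ) * C i := by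
    rw [hC]
    exact (Finset.mul_prod_erase Finset.univ _ (Finset.mem_univ i)).symm
  -- T i divides t - b i where b i = m i * d i
  have hbd : (T i : ℤ) ∣ (∏ k, (m k : ℤ)) * u - (m i : ℤ) * d i := by
    rw [hMC, hTm i]
    obtain ⟨c, hc⟩ := hlin i
    refine ⟨c, ?_⟩
    have : (m i : ℤ) * C i * u - (m i : ℤ) * d i = (m i : ℤ) * (C i * u - d i) := by ring
    rw [this, hc]
    ring
  have hmod : ((∏ k, (m k : ℤ)) * u - τ i) % (T i : ℤ)
      = ((m i : ℤ) * d i - τ i) % (T i : ℤ) := by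
    obtain ⟨c, hc⟩ := hbd
    have : (∏ k, (m k : ℤ)) * u - τ i = ((m i : ℤ) * d i - τ i) + (T i : ℤ) * c := by
      rw [← hc]; ring
    rw [this, Int.add_mul_emod_self_left]
  rw [hmod]
  -- m i * d i - τ i = m i - τ i % m i ∈ (0, m i]
  have hmi : (0 : ℤ) < (m i : ℤ) := by exact_mod_cast hm0 i
  have hdiv : (m i : ℤ) * d i - τ i = (m i : ℤ) - τ i % (m i : ℤ) := by
    rw [hd]
    have := Int.emod_add_mul_ediv (τ i) (m i : ℤ)
    ring_nf
    omega
  have hr1 : (0 : ℤ) < (m i : ℤ) * d i - τ i := by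
    rw [hdiv]
    have := Int.emod_lt_of_pos (τ i) hmi
    omega
  have hr2 : (m i : ℤ) * d i - τ i ≤ (m i : ℤ) := by
    rw [hdiv]
    have := Int.emod_nonneg (τ i) (ne_of_gt hmi)
    omega
  have hmT : (m i : ℤ) < (T i : ℤ) := by
    have h2 : (2 : ℤ) ≤ (p i : ℤ) := by exact_mod_cast (hp i).two_le
    rw [hTm i]
    nlinarith
  rw [Int.emod_eq_of_lt (le_of_lt hr1) (lt_of_le_of_lt hr2 hmT)]
  exact hr2

/-- If each time interval `T_i` has a prime divisor `p_i ≥ 1/ε` dividing no other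
interval, then every integer shift vector has peak inventory level at least
`(1−ε)·H_Σ`; in particular `OPT^disc ≥ (1−ε)·H_Σ`. -/
theorem stmt9 {n : ℕ} (T H : Fin n → ℕ) (hT : ∀ i, 0 < T i) (hH : ∀ i, 0 < H i)
    (ε : ℝ) (hε : ε ∈ Set.Ioo (0 : ℝ) 1) (p : Fin n → ℕ) (hp : ∀ i, (p i).Prime)
    (hpe : ∀ i, 1 / ε ≤ (p i : ℝ)) (hdvd : ∀ i, p i ∣ T i)
    (hnd : ∀ i k, k ≠ i → ¬ p i ∣ T k) :
    (∀ τ : Fin n → ℤ, (1 - ε) * ∑ i, (H i : ℝ) ≤ Imax T H τ) ∧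
    (1 - ε) * ∑ i, (H i : ℝ) ≤ OPTdisc T H := by
  obtain ⟨hε0, hε1⟩ := hε
  have hΛ0 : cycleLen T ≠ 0 := by
    unfold cycleLen
    rw [Ne, Finset.lcm_eq_zero_iff]
    rintro ⟨i, -, hi⟩
    exact (hT i).ne' hi
  have hΛpos : (0 : ℤ) < (cycleLen T : ℤ) := by
    exact_mod_cast Nat.pos_of_ne_zero hΛ0
  have main : ∀ τ : Fin n → ℤ, (1 - ε) * ∑ i, (H i : ℝ) ≤ Imax T H τ := by
    intro τ
    obtain ⟨t, ht⟩ := exists_sync T hT p hp hdvd hnd τ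
    -- lower bound on totalInv at t
    have hbound : (1 - ε) * ∑ i, (H i : ℝ) ≤ totalInv T H τ t := by
      rw [Finset.mul_sum]
      unfold totalInv
      refine Finset.sum_le_sum ?_
      intro i _
      unfold invLevel
      have hTpos : (0 : ℝ) < (T i : ℝ) := by exact_mod_cast hT i
      have hppos : (0 : ℝ) < (p i : ℝ) := by exact_mod_cast (hp i).pos
      have hεp : 1 / (p i : ℝ) ≤ ε := by
        rw [div_le_iff₀ hppos]
        have := hpe i
        rw [div_le_iff₀ hε0] at this
        linarith [mul_comm ε (p i : ℝ)]
      have hrT : ((((t - τ i) % (T i : ℤ) : ℤ) : ℝ)) / (T i : ℝ) ≤ ε := by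
        have h1 : ((((t - τ i) % (T i : ℤ) : ℤ) : ℝ)) ≤ ((T i / p i : ℕ) : ℝ) :=
          calc ((((t - τ i) % (T i : ℤ) : ℤ) : ℝ))
              ≤ (((T i / p i : ℕ) : ℤ) : ℝ) := Int.cast_le.mpr (ht i)
            _ = ((T i / p i : ℕ) : ℝ) := Int.cast_natCast _
        have h2 : ((T i / p i : ℕ) : ℝ) = (T i : ℝ) / (p i : ℝ) := by
          rw [Nat.cast_div (hdvd i) (by exact_mod_cast hppos.ne')]
        have h3 : (T i : ℝ) / (p i : ℝ) / (T i : ℝ) = 1 / (p i : ℝ) := by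
          field_simp
        calc ((((t - τ i) % (T i : ℤ) : ℤ) : ℝ)) / (T i : ℝ)
            ≤ ((T i / p i : ℕ) : ℝ) / (T i : ℝ) := by gcongr
          _ = 1 / (p i : ℝ) := by rw [h2, h3]
          _ ≤ ε := hεp
      have hH0 : (0 : ℝ) ≤ (H i : ℝ) := by positivity
      nlinarith [hrT]
    -- move t into the window [0, Λ)
    set t' : ℤ := t % (cycleLen T : ℤ) with ht'
    have hmem : t' ∈ Set.Ico (0 : ℤ) (cycleLen T : ℤ) :=
      ⟨Int.emod_nonneg t (ne_of_gt hΛpos), Int.emod_lt_of_pos t hΛpos⟩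
    have heq : totalInv T H τ t' = totalInv T H τ t := by
      unfold totalInv invLevel
      refine Finset.sum_congr rfl ?_
      intro i _
      have hdvdΛ : (T i : ℤ) ∣ (cycleLen T : ℤ) :=
        Int.natCast_dvd_natCast.mpr (Finset.dvd_lcm (Finset.mem_univ i))
      have : (t' - τ i) % (T i : ℤ) = (t - τ i) % (T i : ℤ) := by
        rw [ht', Int.sub_emod, Int.emod_emod_of_dvd t hdvdΛ, ← Int.sub_emod]
      rw [this]
    have hbdd : BddAbove (totalInv T H τ '' Set.Ico (0 : ℤ) (cycleLen T : ℤ)) :=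
      ((Set.finite_Ico _ _).image _).bddAbove
    have : totalInv T H τ t' ≤ Imax T H τ :=
      le_csSup hbdd (Set.mem_image_of_mem _ hmem)
    rw [heq] at this
    exact hbound.trans this
  refine ⟨main, ?_⟩
  refine le_csInf ⟨Imax T H 0, ⟨0, rfl⟩⟩ ?_
  rintro b ⟨τ, rfl⟩
  exact main τ
end

section
/- Let ε ∈ (0,1). For each item i define the discretization set D_i = {0, 1, …, T_i} if T_i ≤ 1/ε, and D_i = {⌊εT_i⌋, ⌊2εT_i⌋, …, ⌊⌊1/ε⌋·εT_i⌋} ∪ {T_i} if T_i > 1/ε. Then for every shift vector τ* ∈ ∏_{i=1}^n {0, …, T_i − 1} there exists a shift vector τ with τ_i ∈ D_i for every i ∈ [n] such that I_max(τ) ≤ (1 + 4ε)·I_max(τ*). In particular, some D-restricted shift vector has peak inventory level at most (1 + 4ε)·OPT^disc. -/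
/-! ### Auxiliary lemmas -/


lemma IS.pointwise (T H : ℕ) (hT : 0 < T) (s d t : ℤ) (ε : ℝ)
    (hsd : s ≤ d) (hδ : ((d - s : ℤ) : ℝ) ≤ 2 * ε * T) :
    invLevel T H d t ≤ invLevel T H s t + 2 * ε * H := by
  have hTZ : (0:ℤ) < (T:ℤ) := by exact_mod_cast hT
  set a := (t - s) % (T:ℤ) with ha
  set b := (t - d) % (T:ℤ) with hb
  have hdvd : (T:ℤ) ∣ (a - b - (d - s)) :=
    ⟨(t - d)/T - (t - s)/T, by rw [ha, hb, Int.emod_def, Int.emod_def]; ring⟩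
  have haT : a < T := Int.emod_lt_of_pos _ hTZ
  have hb0 : 0 ≤ b := Int.emod_nonneg _ (by positivity)
  have ha0 : 0 ≤ a := Int.emod_nonneg _ (by positivity)
  have hbT : b < T := Int.emod_lt_of_pos _ hTZ
  have hle : a - b ≤ d - s := by
    by_contra hc
    push_neg at hc
    have h1 : (0:ℤ) < a - b - (d - s) := by omega
    have := Int.le_of_dvd h1 hdvd
    omega
  have hTR : (0:ℝ) < (T:ℝ) := by exact_mod_cast hT
  have hab : ((a:ℝ) - (b:ℝ)) ≤ 2 * ε * T := by
    have : ((a - b : ℤ):ℝ) ≤ ((d - s : ℤ):ℝ) := by exact_mod_cast hle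
    push_cast at this hδ ⊢; linarith
  have hdiv : ((a:ℝ) - (b:ℝ)) / T ≤ 2 * ε := by
    rw [div_le_iff₀ hTR]; linarith
  have hH0 : (0:ℝ) ≤ (H:ℝ) := Nat.cast_nonneg _
  simp only [invLevel, ← ha, ← hb]
  have hmul : (H:ℝ) * (((a:ℝ) - b) / T) ≤ (H:ℝ) * (2*ε) :=
    mul_le_mul_of_nonneg_left hdiv hH0
  have expand : (H:ℝ) * (1 - (b:ℝ)/T) - (H:ℝ) * (1 - (a:ℝ)/T) = (H:ℝ) * (((a:ℝ) - b)/T) := by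
    field_simp; ring
  linarith [expand ▸ hmul]

lemma IS.emod_add (T : ℕ) (x y : ℤ) : (x % (T:ℤ) + y) % (T:ℤ) = (x + y) % (T:ℤ) := by
  rw [Int.emod_def x,
    show x - (T:ℤ) * (x / (T:ℤ)) + y = (x + y) + (T:ℤ) * (-(x / (T:ℤ))) by ring,
    Int.add_mul_emod_self_left]

lemma IS.window (g : ℤ → ℝ) (c τ : ℤ) (T : ℕ) (hT : 0 < T) :
    ∑ t ∈ Finset.Ico c (c + T), g ((t - τ) % (T:ℤ)) = ∑ a ∈ Finset.Ico (0:ℤ) (T:ℤ), g a := by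
  have hTZ : (0:ℤ) < (T:ℤ) := by exact_mod_cast hT
  apply Finset.sum_nbij' (i := fun t => (t - τ) % (T:ℤ)) (j := fun a => c + ((a + τ - c) % (T:ℤ)))
  · intro t ht
    simp only [Finset.mem_Ico] at *
    exact ⟨Int.emod_nonneg _ (by positivity), Int.emod_lt_of_pos _ hTZ⟩
  · intro a ha
    simp only [Finset.mem_Ico] at *
    constructor
    · linarith [Int.emod_nonneg (a + τ - c) (show (T:ℤ) ≠ 0 by positivity)]
    · linarith [Int.emod_lt_of_pos (a + τ - c) hTZ]
  · intro t ht
    simp only [Finset.mem_Ico] at ht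
    have h1 : ((t - τ) % (T:ℤ) + τ - c) % (T:ℤ) = (t - c) % (T:ℤ) := by
      calc ((t - τ) % (T:ℤ) + τ - c) % (T:ℤ)
          = ((t - τ) % (T:ℤ) + (τ - c)) % (T:ℤ) := by ring_nf
        _ = ((t - τ) + (τ - c)) % (T:ℤ) := IS.emod_add T _ _
        _ = (t - c) % (T:ℤ) := by ring_nf
    rw [h1, Int.emod_eq_of_lt (by omega) (by omega)]
    omega
  · intro a ha
    simp only [Finset.mem_Ico] at ha
    have h1 : (c + (a + τ - c) % (T:ℤ) - τ) % (T:ℤ) = a % (T:ℤ) := by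
      calc (c + (a + τ - c) % (T:ℤ) - τ) % (T:ℤ)
          = ((a + τ - c) % (T:ℤ) + (c - τ)) % (T:ℤ) := by ring_nf
        _ = ((a + τ - c) + (c - τ)) % (T:ℤ) := IS.emod_add T _ _
        _ = a % (T:ℤ) := by ring_nf
    rw [h1, Int.emod_eq_of_lt (by omega) (by omega)]
  · intro t ht; rfl

lemma IS.repeatSum (g : ℤ → ℝ) (τ : ℤ) (T : ℕ) (hT : 0 < T) (k : ℕ) :
    ∑ t ∈ Finset.Ico (0:ℤ) ((k*T : ℕ):ℤ), g ((t - τ) % (T:ℤ))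
      = k * ∑ a ∈ Finset.Ico (0:ℤ) (T:ℤ), g a := by
  induction k with
  | zero => simp
  | succ k ih =>
    have hA : (0:ℤ) ≤ ((k*T:ℕ):ℤ) := by positivity
    have hBn : k*T ≤ (k+1)*T := Nat.mul_le_mul_right T (Nat.le_succ k)
    have hB : ((k*T:ℕ):ℤ) ≤ (((k+1)*T:ℕ):ℤ) := by exact_mod_cast hBn
    have hunion : Finset.Ico (0:ℤ) ((k*T:ℕ):ℤ) ∪ Finset.Ico ((k*T:ℕ):ℤ) (((k+1)*T:ℕ):ℤ)
        = Finset.Ico (0:ℤ) (((k+1)*T:ℕ):ℤ) := Finset.Ico_union_Ico_eq_Ico hA hB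
    rw [← hunion, Finset.sum_union (Finset.Ico_disjoint_Ico_consecutive _ _ _), ih]
    have heq : (((k+1)*T:ℕ):ℤ) = ((k*T:ℕ):ℤ) + (T:ℤ) := by push_cast; ring
    rw [heq, IS.window g _ τ T hT]
    push_cast; ring

lemma IS.gauss (n : ℕ) : ∑ a ∈ Finset.Ico (0:ℤ) (n:ℤ), ((a:ℝ)) = n*(n-1)/2 := by
  induction n with
  | zero => simp
  | succ k ih =>
    have hins : Finset.Ico (0:ℤ) ((k:ℤ)+1) = insert (k:ℤ) (Finset.Ico (0:ℤ) (k:ℤ)) := by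
      ext x; simp only [Finset.mem_Ico, Finset.mem_insert]; omega
    rw [Nat.cast_succ, hins, Finset.sum_insert (by simp)]
    rw [ih]; push_cast; ring

lemma IS.avgItem (T H : ℕ) (hT : 0 < T) (τ : ℤ) (Λ : ℕ) (hdvd : T ∣ Λ) :
    (Λ:ℝ) * H / 2 ≤ ∑ t ∈ Finset.Ico (0:ℤ) (Λ:ℤ), invLevel T H τ t := by
  obtain ⟨k, hk⟩ := hdvd
  have hΛ : Λ = k * T := by rw [hk, Nat.mul_comm]
  subst hΛ
  have hrs := IS.repeatSum (fun a : ℤ => (H:ℝ) * (1 - (a:ℝ)/(T:ℝ))) τ T hT k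
  have heq : ∑ t ∈ Finset.Ico (0:ℤ) ((k*T:ℕ):ℤ), invLevel T H τ t
      = ∑ t ∈ Finset.Ico (0:ℤ) ((k*T:ℕ):ℤ),
          (fun a : ℤ => (H:ℝ) * (1 - (a:ℝ)/(T:ℝ))) ((t - τ) % (T:ℤ)) := rfl
  rw [heq, hrs]
  have hTR : (0:ℝ) < (T:ℝ) := by exact_mod_cast hT
  have hsum : ∑ a ∈ Finset.Ico (0:ℤ) (T:ℤ), (H:ℝ) * (1 - (a:ℝ)/T)
      = (H:ℝ) * ((T:ℝ) + 1) / 2 := by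
    have hcard : (Finset.Ico (0:ℤ) (T:ℤ)).card = T := by
      rw [Int.card_Ico]; simp
    have hterm : ∀ a ∈ Finset.Ico (0:ℤ) (T:ℤ),
        (H:ℝ) * (1 - (a:ℝ)/(T:ℝ)) = (H:ℝ) - ((H:ℝ)/T) * (a:ℝ) := by
      intro a _; field_simp
    rw [Finset.sum_congr rfl hterm, Finset.sum_sub_distrib, Finset.sum_const,
      ← Finset.mul_sum, IS.gauss, hcard, nsmul_eq_mul]
    field_simp; ring
  rw [hsum]
  have hH0 : (0:ℝ) ≤ (H:ℝ) := Nat.cast_nonneg _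
  have hk0 : (0:ℝ) ≤ (k:ℝ) := Nat.cast_nonneg _
  push_cast
  nlinarith [hH0, hk0, hTR]

lemma IS.cycleLen_pos {ι : Type*} [Fintype ι] (T : ι → ℕ) (hT : ∀ i, 0 < T i) :
    0 < cycleLen T := by
  rw [Nat.pos_iff_ne_zero]
  intro h0
  rcases Finset.lcm_eq_zero_iff.1 h0 with ⟨i, _, hfi⟩
  exact (hT i).ne' hfi

lemma IS.imax_mem_le {ι : Type*} [Fintype ι] (T H : ι → ℕ) (τ : ι → ℤ) (t : ℤ)
    (ht : t ∈ Set.Ico (0:ℤ) (cycleLen T : ℤ)) :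
    totalInv T H τ t ≤ Imax T H τ :=
  le_csSup ((Set.finite_Ico _ _).image _).bddAbove (Set.mem_image_of_mem _ ht)

/-- key lower bound : `H_Σ / 2 ≤ Imax`. -/
lemma IS.half_le_Imax {ι : Type*} [Fintype ι] (T H : ι → ℕ) (hT : ∀ i, 0 < T i)
    (τ : ι → ℤ) : (∑ i, (H i : ℝ)) / 2 ≤ Imax T H τ := by
  set Λ := cycleLen T with hΛdef
  have hΛ : 0 < Λ := IS.cycleLen_pos T hT
  have hΛR : (0:ℝ) < (Λ:ℝ) := by exact_mod_cast hΛ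
  have hsum : (Λ:ℝ) * ((∑ i, (H i : ℝ)) / 2) ≤
      ∑ t ∈ Finset.Ico (0:ℤ) (Λ:ℤ), totalInv T H τ t := by
    unfold totalInv
    rw [Finset.sum_comm]
    calc (Λ:ℝ) * ((∑ i, (H i : ℝ)) / 2) = ∑ i, (Λ:ℝ) * (H i) / 2 := by
          rw [Finset.sum_div, Finset.mul_sum]
          exact Finset.sum_congr rfl fun i _ => by ring
      _ ≤ ∑ i, ∑ t ∈ Finset.Ico (0:ℤ) (Λ:ℤ), invLevel (T i) (H i) (τ i) t := by
          apply Finset.sum_le_sum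
          intro i _
          exact IS.avgItem (T i) (H i) (hT i) (τ i) Λ (Finset.dvd_lcm (Finset.mem_univ i))
  have hub : ∑ t ∈ Finset.Ico (0:ℤ) (Λ:ℤ), totalInv T H τ t ≤ (Λ:ℝ) * Imax T H τ := by
    have hcard : (Finset.Ico (0:ℤ) (Λ:ℤ)).card = Λ := by rw [Int.card_Ico]; simp
    calc ∑ t ∈ Finset.Ico (0:ℤ) (Λ:ℤ), totalInv T H τ t
        ≤ ∑ _t ∈ Finset.Ico (0:ℤ) (Λ:ℤ), Imax T H τ := by
          apply Finset.sum_le_sum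
          intro t ht
          apply IS.imax_mem_le
          simpa [Set.mem_Ico] using Finset.mem_Ico.1 ht
      _ = (Λ:ℝ) * Imax T H τ := by rw [Finset.sum_const, hcard, nsmul_eq_mul]
  have := hsum.trans hub
  exact le_of_mul_le_mul_left this hΛR

lemma IS.round (T : ℕ) (hT : 0 < T) (ε : ℝ) (hε0 : 0 < ε) (hε1 : ε < 1) (D : Finset ℤ)
    (hD : D = if (T : ℝ) ≤ 1 / ε then Finset.Icc (0 : ℤ) (T : ℤ)
      else insert ((T : ℕ) : ℤ)
        ((Finset.Icc 1 ⌊1 / ε⌋₊).image fun j : ℕ => ⌊(j : ℝ) * (ε * (T : ℝ))⌋))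
    (s : ℤ) (hs : s ∈ Finset.Ico (0:ℤ) (T:ℤ)) :
    ∃ d ∈ D, s ≤ d ∧ ((d - s : ℤ) : ℝ) ≤ 2 * ε * T := by
  rw [Finset.mem_Ico] at hs
  have hTR : (0:ℝ) < (T:ℝ) := by exact_mod_cast hT
  have hεT : 0 < ε * T := by positivity
  by_cases hsmall : (T : ℝ) ≤ 1 / ε
  · refine ⟨s, ?_, le_refl s, ?_⟩
    · rw [hD, if_pos hsmall, Finset.mem_Icc]
      exact ⟨hs.1, le_of_lt hs.2⟩
    · simp only [sub_self, Int.cast_zero]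
      positivity
  · push_neg at hsmall
    have hεT1 : 1 < ε * T := by
      have := (div_lt_iff₀ hε0).1 hsmall
      linarith
    set m := ⌊1 / ε⌋₊ with hm
    have hm1 : 1 ≤ m := Nat.le_floor (by rw [Nat.cast_one]; exact (le_div_iff₀ hε0).2 (by linarith))
    have hmub : (1:ℝ)/ε < (m:ℝ) + 1 := Nat.lt_floor_add_one _
    by_cases hex : ∃ j ∈ Finset.Icc 1 m, (s:ℝ) ≤ (j:ℝ) * (ε * T)
    · set F := (Finset.Icc 1 m).filter (fun j : ℕ => (s:ℝ) ≤ (j:ℝ) * (ε * (T:ℝ))) with hF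
      have hFne : F.Nonempty := by
        obtain ⟨j, hj1, hj2⟩ := hex
        exact ⟨j, Finset.mem_filter.2 ⟨hj1, hj2⟩⟩
      set j := F.min' hFne with hj
      have hjF : j ∈ F := Finset.min'_mem _ _
      rw [hF, Finset.mem_filter, Finset.mem_Icc] at hjF
      obtain ⟨⟨hj1, hjm⟩, hjs⟩ := hjF
      refine ⟨⌊(j : ℝ) * (ε * T)⌋, ?_, ?_, ?_⟩
      · rw [hD, if_neg (by push_neg; exact hsmall)]
        exact Finset.mem_insert_of_mem (Finset.mem_image.2 ⟨j, Finset.mem_Icc.2 ⟨hj1, hjm⟩, rfl⟩)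
      · exact Int.le_floor.2 hjs
      · have hfl : ((⌊(j : ℝ) * (ε * T)⌋ : ℤ) : ℝ) ≤ (j:ℝ) * (ε * T) := Int.floor_le _
        have hs0 : (0:ℝ) ≤ (s:ℝ) := by exact_mod_cast hs.1
        rcases eq_or_lt_of_le hj1 with hj1' | hj2'
        · -- j = 1
          have hjj : (j:ℝ) = 1 := by exact_mod_cast hj1'.symm
          have hfl2 : ((⌊(j : ℝ) * (ε * T)⌋ : ℤ) : ℝ) ≤ ε * (T:ℝ) :=
            hfl.trans_eq (by rw [hjj]; ring)
          push_cast
          linarith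
        · -- j ≥ 2 : j - 1 not in F
          have hjm1 : j - 1 ∈ Finset.Icc 1 m := Finset.mem_Icc.2 ⟨by omega, by omega⟩
          have hnot : ¬ ((s:ℝ) ≤ ((j:ℕ) - 1 : ℕ) * (ε * T)) := by
            intro hcon
            have : j ≤ j - 1 := Finset.min'_le F (j-1) (Finset.mem_filter.2 ⟨hjm1, hcon⟩)
            omega
          push_neg at hnot
          have hcast : (((j:ℕ) - 1 : ℕ) : ℝ) = (j:ℝ) - 1 := by
            have : (1:ℕ) ≤ j := hj1
            push_cast [this]; ring
          rw [hcast] at hnot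
          push_cast
          nlinarith
    · push_neg at hex
      have hmI : m ∈ Finset.Icc 1 m := Finset.mem_Icc.2 ⟨hm1, le_refl m⟩
      have hgt := hex m hmI
      have hmlb : (1:ℝ)/ε - 1 < (m:ℝ) := by linarith
      have hTεT : (T:ℝ) - ε * T < (m:ℝ) * (ε * T) := by
        have h1 : ((1:ℝ)/ε - 1) * (ε * T) < (m:ℝ) * (ε * T) :=
          mul_lt_mul_of_pos_right hmlb hεT
        have h2 : ((1:ℝ)/ε - 1) * (ε * T) = (T:ℝ) - ε * T := by
          field_simp
        linarith
      refine ⟨(T:ℤ), ?_, le_of_lt hs.2, ?_⟩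
      · rw [hD, if_neg (by push_neg; exact hsmall)]
        exact Finset.mem_insert_self _ _
      · push_cast
        nlinarith

lemma IS.invLevel_emod (T H : ℕ) (τ t : ℤ) :
    invLevel T H (τ % (T:ℤ)) t = invLevel T H τ t := by
  unfold invLevel
  congr 2
  conv_lhs => rw [show t - τ % (T:ℤ) = (t - τ) + (T:ℤ) * (τ / (T:ℤ)) by
    rw [Int.emod_def]; ring]
  rw [Int.add_mul_emod_self_left]

/-- With discretization sets `D_i = {0,…,T_i}` when `T_i ≤ 1/ε`, and
`D_i = {⌊εT_i⌋, ⌊2εT_i⌋, …, ⌊⌊1/ε⌋·εT_i⌋} ∪ {T_i}` when `T_i > 1/ε`: for every shift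
vector `τ* ∈ ∏ {0,…,T_i−1}` there is a `D`-restricted shift vector `τ` with
`I_max(τ) ≤ (1+4ε)·I_max(τ*)`; in particular some `D`-restricted vector has peak
inventory level at most `(1+4ε)·OPT^disc`. -/
theorem stmt11 {n : ℕ} (T H : Fin n → ℕ) (hT : ∀ i, 0 < T i) (hH : ∀ i, 0 < H i)
    (ε : ℝ) (hε : ε ∈ Set.Ioo (0 : ℝ) 1)
    (D : Fin n → Finset ℤ)
    (hD : ∀ i, D i =
      if (T i : ℝ) ≤ 1 / ε then Finset.Icc (0 : ℤ) (T i : ℤ)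
      else insert ((T i : ℕ) : ℤ)
        ((Finset.Icc 1 ⌊1 / ε⌋₊).image fun j : ℕ => ⌊(j : ℝ) * (ε * (T i : ℝ))⌋)) :
    (∀ τstar : Fin n → ℤ, (∀ i, τstar i ∈ Finset.Ico (0 : ℤ) (T i : ℤ)) →
      ∃ τ : Fin n → ℤ, (∀ i, τ i ∈ D i) ∧
        Imax T H τ ≤ (1 + 4 * ε) * Imax T H τstar) ∧
    ∃ τ : Fin n → ℤ, (∀ i, τ i ∈ D i) ∧
      Imax T H τ ≤ (1 + 4 * ε) * OPTdisc T H := by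
  obtain ⟨hε0, hε1⟩ := hε
  have hΛ : 0 < cycleLen T := IS.cycleLen_pos T hT
  have hΛZ : (0:ℤ) < (cycleLen T : ℤ) := by exact_mod_cast hΛ
  have part1 : ∀ τstar : Fin n → ℤ, (∀ i, τstar i ∈ Finset.Ico (0 : ℤ) (T i : ℤ)) →
      ∃ τ : Fin n → ℤ, (∀ i, τ i ∈ D i) ∧
        Imax T H τ ≤ (1 + 4 * ε) * Imax T H τstar := by
    intro τstar hτstar
    choose d hdD hdle hdδ using fun i =>
      IS.round (T i) (hT i) ε hε0 hε1 (D i) (hD i) (τstar i) (hτstar i)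
    refine ⟨d, hdD, ?_⟩
    set S : ℝ := ∑ i, (H i : ℝ) with hS
    have hpt : ∀ t : ℤ, totalInv T H d t ≤ totalInv T H τstar t + 2 * ε * S := by
      intro t
      unfold totalInv
      rw [hS, Finset.mul_sum, ← Finset.sum_add_distrib]
      apply Finset.sum_le_sum
      intro i _
      exact IS.pointwise (T i) (H i) (hT i) (τstar i) (d i) t ε (hdle i) (hdδ i)
    have himax : Imax T H d ≤ Imax T H τstar + 2 * ε * S := by
      apply csSup_le
      · exact ⟨totalInv T H d 0, Set.mem_image_of_mem _ (by
          simp only [Set.mem_Ico]; exact ⟨le_refl 0, hΛZ⟩)⟩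
      · rintro x ⟨t, ht, rfl⟩
        calc totalInv T H d t ≤ totalInv T H τstar t + 2 * ε * S := hpt t
          _ ≤ Imax T H τstar + 2 * ε * S := by
              linarith [IS.imax_mem_le T H τstar t ht]
    have hhalf : S / 2 ≤ Imax T H τstar := IS.half_le_Imax T H hT τstar
    have hS0 : 0 ≤ S := Finset.sum_nonneg fun i _ => Nat.cast_nonneg _
    nlinarith [himax, hhalf, hε0]
  refine ⟨part1, ?_⟩
  -- Part 2: the optimum is attained at a point of the box
  have hinv : ∀ τ : Fin n → ℤ, Imax T H τ = Imax T H (fun i => τ i % (T i : ℤ)) := by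
    intro τ
    unfold Imax
    have : totalInv T H τ = totalInv T H (fun i => τ i % (T i : ℤ)) := by
      funext t
      unfold totalInv
      exact Finset.sum_congr rfl fun i _ => (IS.invLevel_emod (T i) (H i) (τ i) t).symm
    rw [this]
  set Sbox : Set (Fin n → ℤ) := {σ | ∀ i, σ i ∈ Set.Ico (0:ℤ) (T i : ℤ)} with hSbox
  have hfin : Sbox.Finite := by
    have : Sbox = Set.pi Set.univ (fun i => Set.Ico (0:ℤ) (T i : ℤ)) := by
      ext σ; simp [hSbox, Set.mem_pi]
    rw [this]
    exact Set.Finite.pi fun i => Set.finite_Ico _ _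
  have hrange : Set.range (Imax T H) = Imax T H '' Sbox := by
    apply Set.Subset.antisymm
    · rintro x ⟨τ, rfl⟩
      refine ⟨fun i => τ i % (T i : ℤ), fun i => ?_, (hinv τ).symm⟩
      have hTi : (0:ℤ) < (T i : ℤ) := by exact_mod_cast hT i
      exact ⟨Int.emod_nonneg _ (by positivity), Int.emod_lt_of_pos _ hTi⟩
    · exact Set.image_subset_range _ _
  have hne : (Imax T H '' Sbox).Nonempty := by
    refine ⟨Imax T H (fun _ => 0), Set.mem_image_of_mem _ fun i => ?_⟩
    have hTi : (0:ℤ) < (T i : ℤ) := by exact_mod_cast hT i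
    exact ⟨le_refl 0, hTi⟩
  have hmem : sInf (Set.range (Imax T H)) ∈ Imax T H '' Sbox := by
    rw [hrange]
    exact Set.Nonempty.csInf_mem hne (hfin.image _)
  obtain ⟨τstar, hτstarS, hτstarEq⟩ := hmem
  obtain ⟨τ, hτD, hτle⟩ := part1 τstar (fun i => by
    have := hτstarS i
    simp only [Set.mem_Ico] at this
    exact Finset.mem_Ico.2 this)
  refine ⟨τ, hτD, ?_⟩
  unfold OPTdisc
  rw [← hτstarEq]
  exact hτle
end
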